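/- arXiv:1709.07797 — 3 statements merged into one kernel-verified Lean document; each statement's English description precedes it below -/
import Mathlib

section
/- Let α₁,…,α_n be positive real numbers and let Q ⊂ ℝⁿ be the set of all vertices of the axis-aligned box with these side lengths, i.e. Q = { Σ_{i∈I} α_i e_i : I ⊆ {1,…,n} } where e_i are the standard basis vectors. Then every piecewise-C¹ path γ from the origin to the far corner p = Σ_{i=1}^n α_i e_i satisfies ℓ(γ) ≥ (1/4) Σ_{i=1}^n α_i², where ℓ is the nearest-neighbor path length with respect to Q. Consequently d_N(0, p) = Σ_{i=1}^n α_i² = d₂(0, p). -/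
open scoped BigOperators
open MeasureTheory

noncomputable section

/-- Points of `ℝ^d`. -/
abbrev Pt (d : ℕ) : Type := EuclideanSpace ℝ (Fin d)

/-- The edge-squared metric on a point set `P ⊆ ℝ^d`: the infimum over finite chains of points
of `P` from `a` to `b` of the sum of squared Euclidean lengths of the steps. -/
noncomputable def edgeSq {d : ℕ} (P : Set (Pt d)) (a b : Pt d) : ℝ :=
  sInf {c : ℝ | ∃ (k : ℕ) (p : Fin (k + 1) → Pt d), p 0 = a ∧ p (Fin.last k) = b ∧
    (∀ i, p i ∈ P) ∧ c = ∑ i : Fin k, ‖p i.succ - p i.castSucc‖ ^ 2}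

/-- A path `γ : [0,1] → ℝ^d` is piecewise-C¹ if it is continuous on `[0,1]` and there is a
partition `0 = t₀ < t₁ < ⋯ < t_m = 1` such that `γ` is `C¹` on each subinterval. -/
def PiecewiseC1 {d : ℕ} (γ : ℝ → Pt d) : Prop :=
  ContinuousOn γ (Set.Icc 0 1) ∧
  ∃ (m : ℕ) (t : Fin (m + 1) → ℝ), StrictMono t ∧ t 0 = 0 ∧ t (Fin.last m) = 1 ∧
    ∀ i : Fin m, ContDiffOn ℝ 1 γ (Set.Icc (t i.castSucc) (t i.succ))

/-- The nearest-neighbor length of a path: `ℓ(γ) = ∫₀¹ r_P(γ(t)) ‖γ'(t)‖ dt`, where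
`r_P(z) = min_{x ∈ P} ‖x - z‖` is the distance to the nearest point of `P`. -/
noncomputable def nnLength {d : ℕ} (P : Set (Pt d)) (γ : ℝ → Pt d) : ℝ :=
  ∫ t in (0:ℝ)..1, Metric.infDist (γ t) P * ‖deriv γ t‖

/-- The nearest-neighbor geodesic distance:
`d_N(a,b) = 4 ⬝ inf { ℓ(γ) | γ piecewise-C¹ path from a to b }`. -/
noncomputable def nnGeo {d : ℕ} (P : Set (Pt d)) (a b : Pt d) : ℝ :=
  4 * sInf {l : ℝ | ∃ γ : ℝ → Pt d, PiecewiseC1 γ ∧ γ 0 = a ∧ γ 1 = b ∧ l = nnLength P γ}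

/-! ### Auxiliary lemmas -/

lemma vertex_apply {n : ℕ} (α : Fin n → ℝ) (I : Finset (Fin n)) (j : Fin n) :
    (∑ i ∈ I, α i • EuclideanSpace.single i (1:ℝ)) j = if j ∈ I then α j else 0 := by
  classical
  induction I using Finset.induction with
  | empty => simp
  | @insert a s h ih =>
    rw [Finset.sum_insert h]
    simp only [PiLp.add_apply, PiLp.smul_apply, EuclideanSpace.single_apply, ih, smul_eq_mul]
    by_cases hj : j = a <;> by_cases hj2 : j ∈ s <;>
      simp [hj, hj2, Finset.mem_insert] <;> aesop

lemma norm_sq_eq {n : ℕ} (x : Pt n) : ‖x‖^2 = ∑ i, (x i)^2 := by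
  rw [EuclideanSpace.norm_eq, Real.sq_sqrt (by positivity)]
  simp [sq_abs]

lemma le_infDist' {n : ℕ} {s : Set (Pt n)} (hs : s.Nonempty) {x : Pt n} {c : ℝ}
    (h : ∀ y ∈ s, c ≤ dist x y) : c ≤ Metric.infDist x s := by
  rw [Metric.infDist_eq_iInf]
  have : Nonempty s := hs.to_subtype
  exact le_ciInf (fun y => h y y.2)

lemma Q_nonempty {n : ℕ} (α : Fin n → ℝ) (Q : Set (Pt n))
    (hQ : Q = {q : Pt n | ∃ I : Finset (Fin n), q = ∑ i ∈ I, α i • EuclideanSpace.single i (1:ℝ)}) :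
    (0 : Pt n) ∈ Q := by
  rw [hQ]; exact ⟨∅, by simp⟩

lemma coord_mem {n : ℕ} (α : Fin n → ℝ) (Q : Set (Pt n))
    (hQ : Q = {q : Pt n | ∃ I : Finset (Fin n), q = ∑ i ∈ I, α i • EuclideanSpace.single i (1:ℝ)})
    {q : Pt n} (hq : q ∈ Q) (i : Fin n) : q i = 0 ∨ q i = α i := by
  rw [hQ] at hq
  obtain ⟨I, rfl⟩ := hq
  rw [vertex_apply]
  by_cases h : i ∈ I <;> simp [h]

/-! ### The 1-dimensional potential -/

def mfun (a x : ℝ) : ℝ := min |x| |x - a|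

lemma mfun_cont (a : ℝ) : Continuous (mfun a) := by
  unfold mfun; fun_prop

lemma mfun_nonneg (a x : ℝ) : 0 ≤ mfun a x := le_min (abs_nonneg _) (abs_nonneg _)

lemma mfun_le (a x q : ℝ) (hq : q = 0 ∨ q = a) : mfun a x ≤ |x - q| := by
  rcases hq with h | h <;> simp [h, mfun, min_le_left, min_le_right]

noncomputable def Ffun (a x : ℝ) : ℝ := ∫ s in (0:ℝ)..x, mfun a s

lemma hasDerivAt_Ffun (a x : ℝ) : HasDerivAt (Ffun a) (mfun a x) x := by
  have h := intervalIntegral.integral_hasStrictDerivAt_right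
    (f := mfun a) (a := 0) (b := x)
    ((mfun_cont a).intervalIntegrable 0 x)
    ((mfun_cont a).stronglyMeasurableAtFilter _ _)
    (mfun_cont a).continuousAt
  exact h.hasDerivAt

lemma Ffun_zero (a : ℝ) : Ffun a 0 = 0 := intervalIntegral.integral_same

lemma Ffun_self (a : ℝ) (ha : 0 < a) : Ffun a a = a^2/4 := by
  have h1 : ∫ s in (0:ℝ)..(a/2), mfun a s = a^2/8 := by
    rw [intervalIntegral.integral_congr (g := fun s => s)]
    · rw [integral_id]; ring
    · intro x hx
      rw [Set.uIcc_of_le (by linarith)] at hx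
      obtain ⟨h0, h2⟩ := hx
      have : |x| = x := abs_of_nonneg h0
      have h3 : |x - a| = a - x := by rw [abs_of_nonpos (by linarith)]; ring
      simp [mfun, this, h3]; linarith
  have h2 : ∫ s in (a/2)..a, mfun a s = a^2/8 := by
    rw [intervalIntegral.integral_congr (g := fun s => a - s)]
    · rw [intervalIntegral.integral_sub intervalIntegrable_const (intervalIntegral.intervalIntegrable_id),
        intervalIntegral.integral_const, integral_id, smul_eq_mul]
      ring
    · intro x hx
      rw [Set.uIcc_of_le (by linarith)] at hx
      obtain ⟨h0, h2⟩ := hx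
      have hx0 : (0:ℝ) ≤ x := by linarith
      have : |x| = x := abs_of_nonneg hx0
      have h3 : |x - a| = a - x := by rw [abs_of_nonpos (by linarith)]; ring
      simp [mfun, this, h3]; linarith
  have := intervalIntegral.integral_add_adjacent_intervals (μ := volume) (a := 0) (b := a/2) (c := a)
    ((mfun_cont a).intervalIntegrable 0 (a/2)) ((mfun_cont a).intervalIntegrable (a/2) a)
  unfold Ffun
  rw [← this, h1, h2]; ring

/-! ### Cauchy–Schwarz bound and chain rule -/

lemma CS {n : ℕ} (α : Fin n → ℝ) (Q : Set (Pt n))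
    (hQ : Q = {q : Pt n | ∃ I : Finset (Fin n), q = ∑ i ∈ I, α i • EuclideanSpace.single i (1:ℝ)})
    (z v : Pt n) :
    |∑ i, mfun (α i) (z i) * v i| ≤ Metric.infDist z Q * ‖v‖ := by
  set u : Pt n := (WithLp.equiv 2 (Fin n → ℝ)).symm (fun i => mfun (α i) (z i)) with hu
  have hui : ∀ i, u i = mfun (α i) (z i) := fun i => rfl
  have h1 : ∑ i, mfun (α i) (z i) * v i = (inner ℝ u v : ℝ) := by
    rw [PiLp.inner_apply]
    simp [hui, RCLike.inner_apply, mul_comm]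
  have h2 : |(inner ℝ u v : ℝ)| ≤ ‖u‖ * ‖v‖ := abs_real_inner_le_norm u v
  have h3 : ‖u‖ ≤ Metric.infDist z Q := by
    apply le_infDist' ⟨0, Q_nonempty α Q hQ⟩
    intro y hy
    have hsq : ‖u‖^2 ≤ (dist z y)^2 := by
      rw [dist_eq_norm, norm_sq_eq, norm_sq_eq]
      apply Finset.sum_le_sum
      intro i _
      rw [hui]
      have h4 : mfun (α i) (z i) ≤ |z i - y i| :=
        mfun_le _ _ _ (coord_mem α Q hQ hy i)
      have : (z - y) i = z i - y i := rfl
      rw [this]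
      calc mfun (α i) (z i) ^ 2 ≤ |z i - y i|^2 :=
            pow_le_pow_left₀ (mfun_nonneg _ _) h4 2
        _ = (z i - y i)^2 := sq_abs _
    nlinarith [norm_nonneg u, dist_nonneg (x := z) (y := y)]
  calc |∑ i, mfun (α i) (z i) * v i| = |(inner ℝ u v : ℝ)| := by rw [h1]
    _ ≤ ‖u‖ * ‖v‖ := h2
    _ ≤ Metric.infDist z Q * ‖v‖ := by
        apply mul_le_mul_of_nonneg_right h3 (norm_nonneg v)

lemma chain {n : ℕ} (α : Fin n → ℝ) (γ : ℝ → Pt n) (s : Set ℝ) (t : ℝ) (v : Pt n)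
    (h : HasDerivWithinAt γ v s t) :
    HasDerivWithinAt (fun u => ∑ i, Ffun (α i) (γ u i)) (∑ i, mfun (α i) (γ t i) * v i) s t := by
  apply HasDerivWithinAt.fun_sum
  intro i _
  have hcoord : HasDerivWithinAt (fun u => γ u i) (v i) s t :=
    (EuclideanSpace.proj (𝕜 := ℝ) i).hasFDerivAt.comp_hasDerivWithinAt t h
  have := (hasDerivAt_Ffun (α i) (γ t i)).comp_hasDerivWithinAt t hcoord
  exact this

/-! ### The key estimate on a single C¹ piece -/

lemma piece {n : ℕ} (α : Fin n → ℝ) (Q : Set (Pt n))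
    (hQ : Q = {q : Pt n | ∃ I : Finset (Fin n), q = ∑ i ∈ I, α i • EuclideanSpace.single i (1:ℝ)})
    (γ : ℝ → Pt n) (a b : ℝ) (hab : a < b) (hC : ContDiffOn ℝ 1 γ (Set.Icc a b)) :
    IntervalIntegrable (fun t => Metric.infDist (γ t) Q * ‖deriv γ t‖) volume a b ∧
    (∑ i, Ffun (α i) (γ b i)) - (∑ i, Ffun (α i) (γ a i)) ≤
      ∫ t in a..b, Metric.infDist (γ t) Q * ‖deriv γ t‖ := by
  set φ := derivWithin γ (Set.Icc a b) with hφ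
  have hu : UniqueDiffOn ℝ (Set.Icc a b) := uniqueDiffOn_Icc hab
  have hφcont : ContinuousOn φ (Set.Icc a b) := hC.continuousOn_derivWithin hu le_rfl
  have hγcont : ContinuousOn γ (Set.Icc a b) := hC.continuousOn
  have hhcont : ContinuousOn (fun t => Metric.infDist (γ t) Q * ‖φ t‖) (Set.Icc a b) :=
    ((Metric.continuous_infDist_pt Q).comp_continuousOn hγcont).mul hφcont.norm
  have hderiv : ∀ x ∈ Set.Ioo a b, HasDerivAt γ (φ x) x := by
    intro x hx
    have hmem : Set.Icc a b ∈ nhds x := Icc_mem_nhds hx.1 hx.2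
    have hd : DifferentiableWithinAt ℝ γ (Set.Icc a b) x :=
      (hC.differentiableOn one_ne_zero) x (Set.mem_Icc_of_Ioo hx)
    have heq : φ x = deriv γ x := derivWithin_of_mem_nhds hmem
    rw [heq]
    exact (hd.differentiableAt hmem).hasDerivAt
  have hderiv_eq : ∀ x ∈ Set.Ioo a b, deriv γ x = φ x := fun x hx =>
    (derivWithin_of_mem_nhds (Icc_mem_nhds hx.1 hx.2)).symm
  set g' : ℝ → ℝ := fun x => ∑ i, mfun (α i) (γ x i) * φ x i with hg'
  have hg'cont : ContinuousOn g' (Set.Icc a b) := by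
    apply continuousOn_finset_sum
    intro i _
    exact ((mfun_cont (α i)).comp_continuousOn
        ((EuclideanSpace.proj (𝕜 := ℝ) i).continuous.comp_continuousOn hγcont)).mul
      ((EuclideanSpace.proj (𝕜 := ℝ) i).continuous.comp_continuousOn hφcont)
  have hGcont : ContinuousOn (fun x => ∑ i, Ffun (α i) (γ x i)) (Set.Icc a b) := by
    apply continuousOn_finset_sum
    intro i _
    have hFc : Continuous (Ffun (α i)) := by
      have : Differentiable ℝ (Ffun (α i)) := fun x =>
        (hasDerivAt_Ffun (α i) x).differentiableAt
      exact this.continuous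
    exact hFc.comp_continuousOn
      ((EuclideanSpace.proj (𝕜 := ℝ) i).continuous.comp_continuousOn hγcont)
  have hFTC : ∫ x in a..b, g' x
      = (∑ i, Ffun (α i) (γ b i)) - (∑ i, Ffun (α i) (γ a i)) := by
    apply intervalIntegral.integral_eq_sub_of_hasDeriv_right_of_le hab.le hGcont
    · intro x hx
      exact chain α γ (Set.Ioi x) x (φ x) ((hderiv x hx).hasDerivWithinAt)
    · exact hg'cont.intervalIntegrable_of_Icc (μ := volume) hab.le
  have hbound : ∀ x ∈ Set.Icc a b, g' x ≤ Metric.infDist (γ x) Q * ‖φ x‖ :=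
    fun x _ => (le_abs_self _).trans (CS α Q hQ (γ x) (φ x))
  have hmono := intervalIntegral.integral_mono_on (μ := volume) hab.le
    (hg'cont.intervalIntegrable_of_Icc hab.le)
    (hhcont.intervalIntegrable_of_Icc hab.le) hbound
  have hae : ∀ᵐ x ∂(volume : Measure ℝ), x ∈ Set.uIoc a b →
      Metric.infDist (γ x) Q * ‖φ x‖ = Metric.infDist (γ x) Q * ‖deriv γ x‖ := by
    have hb : ∀ᵐ x : ℝ ∂volume, x ∉ ({b} : Set ℝ) :=
      (Set.countable_singleton b).ae_notMem volume
    filter_upwards [hb] with x hxb hx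
    rw [Set.uIoc_of_le hab.le] at hx
    have hxo : x ∈ Set.Ioo a b := ⟨hx.1, lt_of_le_of_ne hx.2 (by simpa using hxb)⟩
    rw [hderiv_eq x hxo]
  have heq : ∫ x in a..b, Metric.infDist (γ x) Q * ‖φ x‖
      = ∫ x in a..b, Metric.infDist (γ x) Q * ‖deriv γ x‖ :=
    intervalIntegral.integral_congr_ae hae
  constructor
  · apply (hhcont.intervalIntegrable_of_Icc hab.le).congr_ae
    exact (ae_restrict_iff' measurableSet_uIoc).2 hae
  · rw [← heq, ← hFTC]; exact hmono

/-! ### Part 1: the lower bound -/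

lemma part1 {n : ℕ} (α : Fin n → ℝ) (hα : ∀ i, 0 < α i) (Q : Set (Pt n))
    (hQ : Q = {q : Pt n | ∃ I : Finset (Fin n), q = ∑ i ∈ I, α i • EuclideanSpace.single i (1:ℝ)})
    (p : Pt n) (hp : p = ∑ i : Fin n, α i • EuclideanSpace.single i (1 : ℝ))
    (γ : ℝ → Pt n) (hγ : PiecewiseC1 γ) (h0 : γ 0 = 0) (h1 : γ 1 = p) :
    nnLength Q γ ≥ (1 / 4) * ∑ i : Fin n, α i ^ 2 := by
  obtain ⟨hcont, m, t, hmono, ht0, htl, hpc⟩ := hγ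
  set G : Pt n → ℝ := fun z => ∑ i, Ffun (α i) (z i) with hG
  set f : ℝ → ℝ := fun x => Metric.infDist (γ x) Q * ‖deriv γ x‖ with hf
  set a : ℕ → ℝ := fun k => t ⟨min k m, Nat.lt_succ_of_le (min_le_right _ _)⟩ with ha
  have ha0 : a 0 = 0 := by
    rw [ha]; simpa [Nat.zero_min] using ht0
  have ham : a m = 1 := by
    rw [ha]; simpa [Nat.min_self, Fin.last] using htl
  have hastep : ∀ k (hk : k < m),
      a k = t (Fin.castSucc ⟨k, hk⟩) ∧ a (k+1) = t (Fin.succ ⟨k, hk⟩) := by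
    intro k hk
    constructor
    · rw [ha]
      apply congrArg
      apply Fin.ext
      simp [Nat.min_eq_left hk.le]
    · rw [ha]
      apply congrArg
      apply Fin.ext
      simp [Nat.min_eq_left hk]
  have hlt : ∀ k (hk : k < m), a k < a (k+1) := by
    intro k hk
    rw [(hastep k hk).1, (hastep k hk).2]
    exact hmono Fin.castSucc_lt_succ
  have hpieces : ∀ k (hk : k < m),
      IntervalIntegrable f volume (a k) (a (k+1)) ∧
      G (γ (a (k+1))) - G (γ (a k)) ≤ ∫ x in (a k)..(a (k+1)), f x := by
    intro k hk
    have hc := hpc ⟨k, hk⟩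
    rw [← (hastep k hk).1, ← (hastep k hk).2] at hc
    exact piece α Q hQ γ (a k) (a (k+1)) (hlt k hk) hc
  have hint : ∀ k < m, IntervalIntegrable f volume (a k) (a (k+1)) :=
    fun k hk => (hpieces k hk).1
  have hsum := intervalIntegral.sum_integral_adjacent_intervals (μ := volume) hint
  have hnn : nnLength Q γ = ∑ k ∈ Finset.range m, ∫ x in (a k)..(a (k+1)), f x := by
    rw [nnLength, hsum, ha0, ham]
  have htel : ∑ k ∈ Finset.range m, (G (γ (a (k+1))) - G (γ (a k)))
      = G (γ 1) - G (γ 0) := by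
    rw [Finset.sum_range_sub (fun k => G (γ (a k))), ha0, ham]
  have hGp : G (γ 1) = (1/4) * ∑ i : Fin n, α i ^ 2 := by
    rw [h1, hG]
    have hpi : ∀ i, p i = α i := by
      intro i
      rw [hp, vertex_apply]
      simp
    simp only [hpi]
    rw [Finset.mul_sum]
    apply Finset.sum_congr rfl
    intro i _
    rw [Ffun_self (α i) (hα i)]; ring
  have hG0 : G (γ 0) = 0 := by
    rw [h0, hG]
    have : ∀ i, (0 : Pt n) i = 0 := fun i => rfl
    simp only [this, Ffun_zero, Finset.sum_const_zero]
  have : (1/4) * ∑ i : Fin n, α i ^ 2 ≤ ∑ k ∈ Finset.range m, ∫ x in (a k)..(a (k+1)), f x := by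
    calc (1/4) * ∑ i : Fin n, α i ^ 2 = G (γ 1) - G (γ 0) := by rw [hGp, hG0]; ring
      _ = ∑ k ∈ Finset.range m, (G (γ (a (k+1))) - G (γ (a k))) := htel.symm
      _ ≤ ∑ k ∈ Finset.range m, ∫ x in (a k)..(a (k+1)), f x :=
          Finset.sum_le_sum (fun k hk => (hpieces k (Finset.mem_range.1 hk)).2)
  rw [ge_iff_le, hnn]
  exact this

/-! ### edgeSq lemmas -/

lemma edgeSq_lb {n : ℕ} (α : Fin n → ℝ) (hα : ∀ i, 0 < α i) (Q : Set (Pt n))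
    (hQ : Q = {q : Pt n | ∃ I : Finset (Fin n), q = ∑ i ∈ I, α i • EuclideanSpace.single i (1:ℝ)})
    (p : Pt n) (hp : p = ∑ i : Fin n, α i • EuclideanSpace.single i (1 : ℝ))
    (c : ℝ) (hc : c ∈ {c : ℝ | ∃ (k : ℕ) (q : Fin (k + 1) → Pt n), q 0 = 0 ∧ q (Fin.last k) = p ∧
      (∀ i, q i ∈ Q) ∧ c = ∑ i : Fin k, ‖q i.succ - q i.castSucc‖ ^ 2}) :
    ∑ i : Fin n, α i ^ 2 ≤ c := by
  obtain ⟨k, q, hq0, hqL, hqm, rfl⟩ := hc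
  have hswap : ∑ j : Fin k, ‖q j.succ - q j.castSucc‖ ^ 2
      = ∑ i : Fin n, ∑ j : Fin k, (q j.succ i - q j.castSucc i) ^ 2 := by
    rw [Finset.sum_comm]
    apply Finset.sum_congr rfl
    intro j _
    rw [norm_sq_eq]
    apply Finset.sum_congr rfl
    intro i _
    rfl
  rw [hswap]
  apply Finset.sum_le_sum
  intro i _
  have hpi : p i = α i := by rw [hp, vertex_apply]; simp
  -- there exists a flip
  have hexists : ∃ j : Fin k, q j.succ i ≠ q j.castSucc i := by
    by_contra h
    push_neg at h
    have hconst : ∀ j : Fin (k+1), q j i = q 0 i := by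
      intro j
      induction j using Fin.induction with
      | zero => rfl
      | succ j ih => rw [h j]; exact ih
    have h1 : q (Fin.last k) i = q 0 i := hconst _
    rw [hqL, hq0, hpi] at h1
    have : (0 : Pt n) i = 0 := rfl
    rw [this] at h1
    exact absurd h1 (ne_of_gt (hα i))
  obtain ⟨j, hj⟩ := hexists
  have hterm : (q j.succ i - q j.castSucc i) ^ 2 = α i ^ 2 := by
    rcases coord_mem α Q hQ (hqm j.succ) i with h1 | h1 <;>
      rcases coord_mem α Q hQ (hqm j.castSucc) i with h2 | h2
    · exact absurd (h1.trans h2.symm) hj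
    · rw [h1, h2]; ring
    · rw [h1, h2]; ring
    · exact absurd (h1.trans h2.symm) hj
  calc α i ^ 2 = (q j.succ i - q j.castSucc i) ^ 2 := hterm.symm
    _ ≤ ∑ j : Fin k, (q j.succ i - q j.castSucc i) ^ 2 :=
        Finset.single_le_sum (f := fun j : Fin k => (q j.succ i - q j.castSucc i) ^ 2)
          (fun j _ => sq_nonneg _) (Finset.mem_univ j)

lemma edgeSq_mem {n : ℕ} (α : Fin n → ℝ) (hα : ∀ i, 0 < α i) (Q : Set (Pt n))
    (hQ : Q = {q : Pt n | ∃ I : Finset (Fin n), q = ∑ i ∈ I, α i • EuclideanSpace.single i (1:ℝ)})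
    (p : Pt n) (hp : p = ∑ i : Fin n, α i • EuclideanSpace.single i (1 : ℝ)) :
    (∑ i : Fin n, α i ^ 2) ∈ {c : ℝ | ∃ (k : ℕ) (q : Fin (k + 1) → Pt n), q 0 = 0 ∧ q (Fin.last k) = p ∧
      (∀ i, q i ∈ Q) ∧ c = ∑ i : Fin k, ‖q i.succ - q i.castSucc‖ ^ 2} := by
  classical
  refine ⟨n, fun j => ∑ i ∈ Finset.univ.filter (fun i : Fin n => (i:ℕ) < (j:ℕ)),
    α i • EuclideanSpace.single i (1:ℝ), ?_, ?_, ?_, ?_⟩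
  · simp
  · rw [hp]
    apply Finset.sum_congr _ (fun _ _ => rfl)
    apply Finset.filter_true_of_mem
    intro i _
    exact i.isLt
  · intro j
    rw [hQ]
    exact ⟨_, rfl⟩
  · apply Finset.sum_congr rfl
    intro j _
    dsimp only
    have hins : Finset.univ.filter (fun i : Fin n => (i:ℕ) < ((j.succ : Fin (n+1)):ℕ))
        = insert j (Finset.univ.filter (fun i : Fin n => (i:ℕ) < ((j.castSucc : Fin (n+1)):ℕ))) := by
      ext x
      simp only [Finset.mem_filter, Finset.mem_univ, true_and, Finset.mem_insert,
        Fin.val_succ, Fin.coe_castSucc]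
      constructor
      · intro h
        rcases Nat.lt_succ_iff_lt_or_eq.1 h with h | h
        · exact Or.inr h
        · exact Or.inl (Fin.ext h)
      · rintro (rfl | h)
        · exact Nat.lt_succ_self _
        · exact Nat.lt_succ_of_lt h
    have hnotmem : j ∉ Finset.univ.filter (fun i : Fin n => (i:ℕ) < ((j.castSucc : Fin (n+1)):ℕ)) := by
      simp
    rw [hins, Finset.sum_insert hnotmem, add_sub_cancel_right, norm_smul,
      EuclideanSpace.norm_single]
    simp [abs_of_pos (hα j)]

/-! ### Staircase -/

lemma coord_le_norm {n : ℕ} (x : Pt n) (i : Fin n) : |x i| ≤ ‖x‖ := by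
  have h1 : (x i)^2 ≤ ‖x‖^2 := by
    rw [norm_sq_eq]
    exact Finset.single_le_sum (f := fun i => (x i)^2) (fun _ _ => sq_nonneg _) (Finset.mem_univ i)
  calc |x i| = Real.sqrt ((x i)^2) := (Real.sqrt_sq_eq_abs _).symm
    _ ≤ Real.sqrt (‖x‖^2) := Real.sqrt_le_sqrt h1
    _ = ‖x‖ := by rw [Real.sqrt_sq (norm_nonneg _)]

/-- The staircase path. -/
def stair {n : ℕ} (α : Fin n → ℝ) : ℝ → Pt n :=
  fun u => (WithLp.equiv 2 (Fin n → ℝ)).symm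
    (fun i => α i * max 0 (min 1 ((n:ℝ)*u - (i:ℕ))))

lemma stair_apply {n : ℕ} (α : Fin n → ℝ) (u : ℝ) (i : Fin n) :
    stair α u i = α i * max 0 (min 1 ((n:ℝ)*u - (i:ℕ))) := rfl

lemma stair_cont {n : ℕ} (α : Fin n → ℝ) : Continuous (stair α) := by
  unfold stair
  apply (PiLp.continuous_toLp (p := 2) (β := fun _ : Fin n => ℝ)).comp
  apply continuous_pi
  intro i
  fun_prop

/-- Box vertex consisting of the first `j` coordinates. -/
def vtx {n : ℕ} (α : Fin n → ℝ) (j : ℕ) : Pt n :=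
  ∑ i ∈ Finset.univ.filter (fun i : Fin n => (i:ℕ) < j), α i • EuclideanSpace.single i (1:ℝ)

lemma vtx_mem {n : ℕ} (α : Fin n → ℝ) (Q : Set (Pt n))
    (hQ : Q = {q : Pt n | ∃ I : Finset (Fin n), q = ∑ i ∈ I, α i • EuclideanSpace.single i (1:ℝ)})
    (j : ℕ) : vtx α j ∈ Q := by
  rw [hQ]; exact ⟨_, rfl⟩

lemma vtx_succ {n : ℕ} (α : Fin n → ℝ) (j : Fin n) :
    vtx α ((j:ℕ)+1) = vtx α (j:ℕ) + α j • EuclideanSpace.single j (1:ℝ) := by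
  unfold vtx
  have hins : Finset.univ.filter (fun i : Fin n => (i:ℕ) < (j:ℕ)+1)
      = insert j (Finset.univ.filter (fun i : Fin n => (i:ℕ) < (j:ℕ))) := by
    ext x
    simp only [Finset.mem_filter, Finset.mem_univ, true_and, Finset.mem_insert]
    constructor
    · intro h
      rcases Nat.lt_succ_iff_lt_or_eq.1 h with h | h
      · exact Or.inr h
      · exact Or.inl (Fin.ext h)
    · rintro (rfl | h)
      · exact Nat.lt_succ_self _
      · exact Nat.lt_succ_of_lt h
  rw [hins, Finset.sum_insert (by simp), add_comm]

/-- Affine model of the staircase on piece `j`. -/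
def Aff {n : ℕ} (α : Fin n → ℝ) (j : Fin n) : ℝ → Pt n :=
  fun u => vtx α (j:ℕ) + (((n:ℝ)*u - (j:ℕ)) * α j) • EuclideanSpace.single j (1:ℝ)

lemma stair_eq_aff {n : ℕ} (α : Fin n → ℝ) (hn : 0 < n) (j : Fin n) :
    Set.EqOn (stair α) (Aff α j) (Set.Icc (((j:ℕ):ℝ)/(n:ℝ)) ((((j:ℕ):ℝ)+1)/(n:ℝ))) := by
  intro u hu
  have hnpos : (0:ℝ) < n := by exact_mod_cast hn
  obtain ⟨hu1, hu2⟩ := hu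
  have hs1 : ((j:ℕ):ℝ) ≤ (n:ℝ)*u := by
    rw [div_le_iff₀ hnpos] at hu1; linarith [hu1]
  have hs2 : (n:ℝ)*u ≤ ((j:ℕ):ℝ)+1 := by
    rw [le_div_iff₀ hnpos] at hu2; linarith [hu2]
  apply PiLp.ext
  intro i
  rw [stair_apply]
  have hAff : Aff α j u i
      = (if (i:ℕ) < (j:ℕ) then α i else 0)
        + (((n:ℝ)*u - (j:ℕ)) * α j) * (if i = j then 1 else 0) := by
    unfold Aff
    rw [PiLp.add_apply, PiLp.smul_apply, EuclideanSpace.single_apply]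
    rw [vtx, vertex_apply]
    simp [Finset.mem_filter]
  rw [hAff]
  rcases lt_trichotomy ((i:ℕ)) ((j:ℕ)) with h | h | h
  · have hij : i ≠ j := fun e => by rw [e] at h; exact lt_irrefl _ h
    have hge : (1:ℝ) ≤ (n:ℝ)*u - ((i:ℕ):ℝ) := by
      have : ((i:ℕ):ℝ) + 1 ≤ ((j:ℕ):ℝ) := by exact_mod_cast Nat.succ_le_of_lt h
      linarith
    rw [min_eq_left hge, max_eq_right zero_le_one]
    simp [h, hij]
  · have hij : i = j := Fin.ext h
    subst hij
    have h0 : (0:ℝ) ≤ (n:ℝ)*u - ((i:ℕ):ℝ) := by linarith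
    have h1 : (n:ℝ)*u - ((i:ℕ):ℝ) ≤ 1 := by linarith
    rw [min_eq_right h1, max_eq_right h0]
    simp [lt_irrefl]
    ring
  · have hij : i ≠ j := fun e => by rw [e] at h; exact lt_irrefl _ h
    have hle : (n:ℝ)*u - ((i:ℕ):ℝ) ≤ 0 := by
      have : ((j:ℕ):ℝ) + 1 ≤ ((i:ℕ):ℝ) := by exact_mod_cast Nat.succ_le_of_lt h
      linarith
    have : min 1 ((n:ℝ)*u - ((i:ℕ):ℝ)) ≤ 0 := le_trans (min_le_right _ _) hle
    rw [max_eq_left this]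
    have : ¬ ((i:ℕ) < (j:ℕ)) := by omega
    simp [this, hij]

lemma aff_contDiff {n : ℕ} (α : Fin n → ℝ) (j : Fin n) : ContDiff ℝ 1 (Aff α j) := by
  apply ContDiff.add contDiff_const
  exact (((contDiff_const.mul contDiff_id).sub contDiff_const).mul contDiff_const).smul
    contDiff_const

lemma aff_hasDerivAt {n : ℕ} (α : Fin n → ℝ) (j : Fin n) (u : ℝ) :
    HasDerivAt (Aff α j) (((n:ℝ) * α j) • EuclideanSpace.single j (1:ℝ)) u := by
  have h1 : HasDerivAt (fun u : ℝ => ((n:ℝ)*u - ((j:ℕ):ℝ)) * α j) ((n:ℝ) * α j) u := by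
    have := (((hasDerivAt_id u).const_mul (n:ℝ)).sub_const (((j:ℕ):ℝ))).mul_const (α j)
    simpa using this
  exact (h1.smul_const (EuclideanSpace.single j (1:ℝ))).const_add (vtx α (j:ℕ))

lemma stair_deriv {n : ℕ} (α : Fin n → ℝ) (hn : 0 < n) (j : Fin n) (u : ℝ)
    (hu : u ∈ Set.Ioo (((j:ℕ):ℝ)/(n:ℝ)) ((((j:ℕ):ℝ)+1)/(n:ℝ))) :
    deriv (stair α) u = ((n:ℝ) * α j) • EuclideanSpace.single j (1:ℝ) := by
  have hev : stair α =ᶠ[nhds u] Aff α j := by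
    apply Filter.eventuallyEq_of_mem (Ioo_mem_nhds hu.1 hu.2)
    exact fun x hx => stair_eq_aff α hn j (Set.Ioo_subset_Icc_self hx)
  rw [hev.deriv_eq, (aff_hasDerivAt α j u).deriv]

lemma stair_infDist {n : ℕ} (α : Fin n → ℝ) (hα : ∀ i, 0 < α i) (Q : Set (Pt n))
    (hQ : Q = {q : Pt n | ∃ I : Finset (Fin n), q = ∑ i ∈ I, α i • EuclideanSpace.single i (1:ℝ)})
    (hn : 0 < n) (j : Fin n) (u : ℝ)
    (hu : u ∈ Set.Icc (((j:ℕ):ℝ)/(n:ℝ)) ((((j:ℕ):ℝ)+1)/(n:ℝ))) :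
    Metric.infDist (stair α u) Q
      = α j * min ((n:ℝ)*u - (j:ℕ)) (1 - ((n:ℝ)*u - (j:ℕ))) := by
  have hnpos : (0:ℝ) < n := by exact_mod_cast hn
  obtain ⟨hu1, hu2⟩ := hu
  set s := (n:ℝ)*u - ((j:ℕ):ℝ) with hsdef
  have hs0 : 0 ≤ s := by rw [div_le_iff₀ hnpos] at hu1; simp [hsdef]; linarith
  have hs1 : s ≤ 1 := by rw [le_div_iff₀ hnpos] at hu2; simp [hsdef]; linarith
  have hσ : stair α u = Aff α j u := stair_eq_aff α hn j ⟨hu1, hu2⟩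
  have hd0 : dist (stair α u) (vtx α (j:ℕ)) = α j * s := by
    rw [hσ, dist_eq_norm]
    unfold Aff
    rw [add_sub_cancel_left, norm_smul, EuclideanSpace.norm_single, norm_one, mul_one,
      Real.norm_eq_abs, abs_of_nonneg (mul_nonneg hs0 (hα j).le)]
    ring
  have hd1 : dist (stair α u) (vtx α ((j:ℕ)+1)) = α j * (1 - s) := by
    rw [hσ, vtx_succ, dist_eq_norm]
    have hdiff : Aff α j u - (vtx α (j:ℕ) + α j • EuclideanSpace.single j (1:ℝ))
        = ((s - 1) * α j) • EuclideanSpace.single j (1:ℝ) := by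
      unfold Aff
      rw [← hsdef]
      module
    rw [hdiff, norm_smul, EuclideanSpace.norm_single, norm_one, mul_one, Real.norm_eq_abs,
      abs_of_nonpos (mul_nonpos_of_nonpos_of_nonneg (by linarith) (hα j).le)]
    ring
  apply le_antisymm
  · rcases le_total s (1 - s) with h | h
    · rw [min_eq_left h, ← hd0]
      exact Metric.infDist_le_dist_of_mem (vtx_mem α Q hQ _)
    · rw [min_eq_right h, ← hd1]
      exact Metric.infDist_le_dist_of_mem (vtx_mem α Q hQ _)
  · apply le_infDist' ⟨0, Q_nonempty α Q hQ⟩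
    intro q hq
    have hcle := coord_le_norm (stair α u - q) j
    have hcoord : (stair α u - q) j = α j * s - q j := by
      have h1 : (stair α u - q) j = stair α u j - q j := rfl
      rw [h1, stair_apply]
      congr 2
      rw [max_eq_right, min_eq_right hs1]
      rw [min_eq_right hs1]; exact hs0
    rw [dist_eq_norm]
    rcases coord_mem α Q hQ hq j with h | h
    · calc α j * min s (1-s) ≤ α j * s := by
            apply mul_le_mul_of_nonneg_left (min_le_left _ _) (hα j).le
        _ = |α j * s - q j| := by
            rw [h, sub_zero, abs_of_nonneg (mul_nonneg (hα j).le hs0)]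
        _ ≤ ‖stair α u - q‖ := by rw [← hcoord]; exact hcle
    · calc α j * min s (1-s) ≤ α j * (1 - s) := by
            apply mul_le_mul_of_nonneg_left (min_le_right _ _) (hα j).le
        _ = |α j * s - q j| := by
            rw [h, abs_of_nonpos (by nlinarith [(hα j).le])]
            ring
        _ ≤ ‖stair α u - q‖ := by rw [← hcoord]; exact hcle

lemma integral_linear (c₁ c₂ a b : ℝ) :
    ∫ u in a..b, (c₁*u + c₂) = c₁*(b^2-a^2)/2 + c₂*(b-a) := by
  have : ∫ u in a..b, (c₁*u + c₂) = (∫ u in a..b, c₁*u) + ∫ u in a..b, c₂ :=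
    intervalIntegral.integral_add ((continuous_const.mul continuous_id).intervalIntegrable a b)
      intervalIntegrable_const
  rw [this, intervalIntegral.integral_const_mul, integral_id,
    intervalIntegral.integral_const, smul_eq_mul]
  ring

/-- The explicit piecewise-linear integrand on piece `j`. -/
def hfun {n : ℕ} (α : Fin n → ℝ) (j : Fin n) : ℝ → ℝ :=
  fun u => (α j * min ((n:ℝ)*u - (j:ℕ)) (1 - ((n:ℝ)*u - (j:ℕ)))) * ((n:ℝ) * α j)

lemma hfun_cont {n : ℕ} (α : Fin n → ℝ) (j : Fin n) : Continuous (hfun α j) := by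
  unfold hfun; fun_prop

lemma hfun_integral {n : ℕ} (α : Fin n → ℝ) (hn : 0 < n) (j : Fin n) :
    ∫ u in (((j:ℕ):ℝ)/(n:ℝ))..((((j:ℕ):ℝ)+1)/(n:ℝ)), hfun α j u = α j ^ 2 / 4 := by
  have hnpos : (0:ℝ) < n := by exact_mod_cast hn
  set a : ℝ := ((j:ℕ):ℝ)/(n:ℝ) with ha
  set c : ℝ := (((j:ℕ):ℝ)+1)/(n:ℝ) with hc
  set b : ℝ := ((j:ℕ):ℝ)/(n:ℝ) + 1/(2*(n:ℝ)) with hb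
  have hab : a ≤ b := by
    rw [ha, hb]
    have : 0 < 1/(2*(n:ℝ)) := by positivity
    linarith
  have hbc : b ≤ c := by
    rw [hb, hc]
    rw [div_add_div _ _ (ne_of_gt hnpos) (by positivity), div_le_div_iff₀ (by positivity) hnpos]
    ring_nf
    nlinarith [hnpos]
  have h1 : ∫ u in a..b, hfun α j u = α j ^2 / 8 := by
    rw [intervalIntegral.integral_congr
      (g := fun u => ((n:ℝ)^2 * α j^2)*u + (-(((j:ℕ):ℝ) * (n:ℝ) * α j^2)))]
    · rw [integral_linear, ha, hb]
      field_simp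
      ring
    · intro u hu
      rw [Set.uIcc_of_le hab] at hu
      obtain ⟨h1, h2⟩ := hu
      have hle : (n:ℝ)*u - ((j:ℕ):ℝ) ≤ 1 - ((n:ℝ)*u - ((j:ℕ):ℝ)) := by
        rw [ha] at h1
        rw [hb] at h2
        have : (n:ℝ)*u ≤ (n:ℝ)*(((j:ℕ):ℝ)/(n:ℝ) + 1/(2*(n:ℝ))) :=
          mul_le_mul_of_nonneg_left h2 hnpos.le
        rw [mul_add, mul_div_cancel₀ _ (ne_of_gt hnpos)] at this
        have h3 : (n:ℝ) * (1/(2*(n:ℝ))) = 1/2 := by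
          field_simp
        rw [h3] at this
        linarith
      unfold hfun
      rw [min_eq_left hle]
      ring
  have h2 : ∫ u in b..c, hfun α j u = α j ^2 / 8 := by
    rw [intervalIntegral.integral_congr
      (g := fun u => (-((n:ℝ)^2 * α j^2))*u + ((1+((j:ℕ):ℝ)) * (n:ℝ) * α j^2))]
    · rw [integral_linear, hb, hc]
      field_simp
      ring
    · intro u hu
      rw [Set.uIcc_of_le hbc] at hu
      obtain ⟨h1, h2⟩ := hu
      have hge : 1 - ((n:ℝ)*u - ((j:ℕ):ℝ)) ≤ (n:ℝ)*u - ((j:ℕ):ℝ) := by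
        rw [hb] at h1
        have : (n:ℝ)*(((j:ℕ):ℝ)/(n:ℝ) + 1/(2*(n:ℝ))) ≤ (n:ℝ)*u :=
          mul_le_mul_of_nonneg_left h1 hnpos.le
        rw [mul_add, mul_div_cancel₀ _ (ne_of_gt hnpos)] at this
        have h3 : (n:ℝ) * (1/(2*(n:ℝ))) = 1/2 := by
          field_simp
        rw [h3] at this
        linarith
      unfold hfun
      rw [min_eq_right hge]
      ring
  have := intervalIntegral.integral_add_adjacent_intervals (μ := volume) (a := a) (b := b) (c := c)
    ((hfun_cont α j).intervalIntegrable a b) ((hfun_cont α j).intervalIntegrable b c)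
  rw [← this, h1, h2]
  ring

lemma stair_start {n : ℕ} (α : Fin n → ℝ) : stair α 0 = 0 := by
  apply PiLp.ext
  intro i
  rw [stair_apply]
  have h : (n:ℝ)*0 - ((i:ℕ):ℝ) ≤ 0 := by
    simp
  have : min 1 ((n:ℝ)*0 - ((i:ℕ):ℝ)) ≤ 0 := le_trans (min_le_right _ _) h
  rw [max_eq_left this]
  simp

lemma stair_end {n : ℕ} (α : Fin n → ℝ) :
    stair α 1 = ∑ i : Fin n, α i • EuclideanSpace.single i (1:ℝ) := by
  apply PiLp.ext
  intro i
  rw [stair_apply]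
  have h : (1:ℝ) ≤ (n:ℝ)*1 - ((i:ℕ):ℝ) := by
    have : (i:ℕ) + 1 ≤ n := i.isLt
    have := Nat.cast_le (α := ℝ).2 this
    push_cast at this
    linarith
  rw [min_eq_left h, max_eq_right zero_le_one]
  rw [show (∑ i : Fin n, α i • EuclideanSpace.single i (1:ℝ)) i
    = if i ∈ Finset.univ then α i else 0 from vertex_apply α Finset.univ i]
  simp

lemma stair_piecewiseC1 {n : ℕ} (α : Fin n → ℝ) (hn : 0 < n) : PiecewiseC1 (stair α) := by
  have hnpos : (0:ℝ) < n := by exact_mod_cast hn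
  refine ⟨(stair_cont α).continuousOn, n, fun j => ((j:ℕ):ℝ)/(n:ℝ), ?_, ?_, ?_, ?_⟩
  · intro x y hxy
    apply div_lt_div_of_pos_right ?_ hnpos
    exact_mod_cast hxy
  · simp
  · simp [Fin.last]
    exact hn.ne'
  · intro i
    dsimp only
    have h1 : (((i.castSucc : Fin (n+1)) : ℕ):ℝ) = ((i:ℕ):ℝ) := by
      simp
    have h2 : (((i.succ : Fin (n+1)) : ℕ):ℝ) = ((i:ℕ):ℝ)+1 := by
      simp
    rw [h1, h2]
    exact ((aff_contDiff α i).contDiffOn).congr (stair_eq_aff α hn i)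

lemma stair_nnLength {n : ℕ} (α : Fin n → ℝ) (hα : ∀ i, 0 < α i) (Q : Set (Pt n))
    (hQ : Q = {q : Pt n | ∃ I : Finset (Fin n), q = ∑ i ∈ I, α i • EuclideanSpace.single i (1:ℝ)})
    (hn : 0 < n) :
    nnLength Q (stair α) = (1/4) * ∑ i : Fin n, α i ^ 2 := by
  have hnpos : (0:ℝ) < n := by exact_mod_cast hn
  set f : ℝ → ℝ := fun t => Metric.infDist (stair α t) Q * ‖deriv (stair α) t‖ with hf
  set a : ℕ → ℝ := fun k => (k:ℝ)/(n:ℝ) with ha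
  have hcast : ∀ k : ℕ, a (k+1) = (k:ℝ)/(n:ℝ) + 1/(n:ℝ) := by
    intro k; rw [ha]; push_cast; ring
  have hlt : ∀ k : ℕ, a k < a (k+1) := by
    intro k
    rw [hcast k, ha]
    have : 0 < 1/(n:ℝ) := by positivity
    linarith
  have hkey : ∀ k (hk : k < n),
      (∀ᵐ u ∂(volume : Measure ℝ), u ∈ Set.uIoc (a k) (a (k+1)) →
        f u = hfun α ⟨k, hk⟩ u) := by
    intro k hk
    have hb : ∀ᵐ x : ℝ ∂volume, x ∉ ({a (k+1)} : Set ℝ) :=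
      (Set.countable_singleton _).ae_notMem volume
    filter_upwards [hb] with u hub hu
    rw [Set.uIoc_of_le (hlt k).le] at hu
    have huo : u ∈ Set.Ioo (a k) (a (k+1)) :=
      ⟨hu.1, lt_of_le_of_ne hu.2 (by simpa using hub)⟩
    set j : Fin n := ⟨k, hk⟩ with hj
    have hjk : ((j:ℕ):ℝ) = (k:ℝ) := by rw [hj]
    have huo' : u ∈ Set.Ioo (((j:ℕ):ℝ)/(n:ℝ)) ((((j:ℕ):ℝ)+1)/(n:ℝ)) := by
      have h4 : ((k:ℝ)+1)/(n:ℝ) = (k:ℝ)/(n:ℝ) + 1/(n:ℝ) := by field_simp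
      rw [hjk, h4]
      exact ⟨huo.1, (hcast k) ▸ huo.2⟩
    show Metric.infDist (stair α u) Q * ‖deriv (stair α) u‖ = hfun α j u
    rw [stair_deriv α hn j u huo',
      stair_infDist α hα Q hQ hn j u (Set.Ioo_subset_Icc_self huo')]
    rw [norm_smul, EuclideanSpace.norm_single, norm_one, mul_one, Real.norm_eq_abs,
      abs_of_nonneg (mul_nonneg hnpos.le (hα j).le)]
    rfl
  have hint : ∀ k, k < n → IntervalIntegrable f volume (a k) (a (k+1)) := by
    intro k hk
    apply ((hfun_cont α ⟨k, hk⟩).intervalIntegrable (a k) (a (k+1))).congr_ae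
    rw [Filter.eventuallyEq_comm]
    exact (ae_restrict_iff' measurableSet_uIoc).2 (hkey k hk)
  have hval : ∀ k (hk : k < n),
      ∫ u in (a k)..(a (k+1)), f u = α ⟨k, hk⟩ ^ 2 / 4 := by
    intro k hk
    rw [intervalIntegral.integral_congr_ae (hkey k hk)]
    have h1 : a k = (((⟨k,hk⟩ : Fin n):ℕ):ℝ)/(n:ℝ) := rfl
    have h2 : a (k+1) = ((((⟨k,hk⟩ : Fin n):ℕ):ℝ)+1)/(n:ℝ) := by
      rw [hcast k]
      have : (((⟨k,hk⟩ : Fin n):ℕ):ℝ) = (k:ℝ) := rfl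
      rw [this, ← add_div]
    rw [h1, h2]
    exact hfun_integral α hn ⟨k, hk⟩
  have hsum := intervalIntegral.sum_integral_adjacent_intervals (μ := volume) hint
  have ha0 : a 0 = 0 := by rw [ha]; simp
  have han : a n = 1 := by rw [ha]; exact div_self (ne_of_gt hnpos)
  have hnn : nnLength Q (stair α) = ∑ k ∈ Finset.range n, ∫ u in (a k)..(a (k+1)), f u := by
    rw [nnLength, ← hf, ← ha0, ← han, hsum]
  rw [hnn]
  set β : ℕ → ℝ := fun k => if h : k < n then α ⟨k,h⟩ ^2/4 else 0 with hβ
  have hterm : ∀ k ∈ Finset.range n, (∫ u in (a k)..(a (k+1)), f u) = β k := by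
    intro k hk
    have hk' : k < n := Finset.mem_range.1 hk
    rw [hval k hk', hβ]
    simp [hk']
  rw [Finset.sum_congr rfl hterm]
  rw [← Fin.sum_univ_eq_sum_range β n]
  rw [Finset.mul_sum]
  apply Finset.sum_congr rfl
  intro i _
  rw [hβ]
  simp [i.isLt]
  ring


lemma exists_path {n : ℕ} (α : Fin n → ℝ) (hα : ∀ i, 0 < α i) (Q : Set (Pt n))
    (hQ : Q = {q : Pt n | ∃ I : Finset (Fin n), q = ∑ i ∈ I, α i • EuclideanSpace.single i (1:ℝ)})
    (p : Pt n) (hp : p = ∑ i : Fin n, α i • EuclideanSpace.single i (1 : ℝ)) :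
    ∃ γ : ℝ → Pt n, PiecewiseC1 γ ∧ γ 0 = 0 ∧ γ 1 = p ∧
      nnLength Q γ = (1/4) * ∑ i : Fin n, α i ^ 2 := by
  rcases Nat.eq_zero_or_pos n with hn | hn
  · subst hn
    refine ⟨fun _ => 0, ?_, rfl, ?_, ?_⟩
    · refine ⟨continuousOn_const, 1, ![0,1], ?_, ?_, ?_, ?_⟩
      · intro a b h
        fin_cases a <;> fin_cases b <;> simp_all <;> norm_num
      · simp
      · simp [Fin.last]
      · intro i
        exact contDiffOn_const
    · rw [hp]
      simp
    · have hd : ∀ t : ℝ, deriv (fun _ : ℝ => (0 : Pt 0)) t = 0 := fun t => deriv_const _ _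
      rw [nnLength]
      simp only [hd, norm_zero, mul_zero, intervalIntegral.integral_zero]
      simp
  · refine ⟨stair α, stair_piecewiseC1 α hn, stair_start α, ?_,
      stair_nnLength α hα Q hQ hn⟩
    rw [stair_end α, hp]

/-- Let `Q ⊆ ℝⁿ` be the set of vertices of the axis-aligned box with positive
side lengths `α₁, …, α_n`. Every piecewise-C¹ path `γ` from the origin to the far corner
`p = ∑ i, α i • e i` satisfies `ℓ(γ) ≥ (1/4) ∑ i, α i²`; consequently
`d_N(0, p) = ∑ i, α i ² = d₂(0, p)`. -/
theorem box_path_length (n : ℕ) (α : Fin n → ℝ) (hα : ∀ i, 0 < α i)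
    (Q : Set (Pt n))
    (hQ : Q = {q : Pt n | ∃ I : Finset (Fin n),
      q = ∑ i ∈ I, α i • EuclideanSpace.single i (1 : ℝ)})
    (p : Pt n) (hp : p = ∑ i : Fin n, α i • EuclideanSpace.single i (1 : ℝ)) :
    (∀ γ : ℝ → Pt n, PiecewiseC1 γ → γ 0 = 0 → γ 1 = p →
        nnLength Q γ ≥ (1 / 4) * ∑ i : Fin n, α i ^ 2) ∧
    nnGeo Q 0 p = ∑ i : Fin n, α i ^ 2 ∧
    edgeSq Q 0 p = ∑ i : Fin n, α i ^ 2 := by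
  refine ⟨fun γ h1 h2 h3 => part1 α hα Q hQ p hp γ h1 h2 h3, ?_, ?_⟩
  · obtain ⟨γ₀, hpc, h0, h1, hval⟩ := exists_path α hα Q hQ p hp
    set L := {l : ℝ | ∃ γ : ℝ → Pt n, PiecewiseC1 γ ∧ γ 0 = 0 ∧ γ 1 = p ∧ l = nnLength Q γ}
      with hL
    have hmem : ((1/4) * ∑ i : Fin n, α i ^ 2) ∈ L := ⟨γ₀, hpc, h0, h1, hval.symm⟩
    have hlbset : ∀ l ∈ L, (1/4) * ∑ i : Fin n, α i ^ 2 ≤ l := by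
      rintro l ⟨γ, hg, hg0, hg1, rfl⟩
      exact part1 α hα Q hQ p hp γ hg hg0 hg1
    have hinf : sInf L = (1/4) * ∑ i : Fin n, α i ^ 2 :=
      le_antisymm (csInf_le ⟨_, hlbset⟩ hmem) (le_csInf ⟨_, hmem⟩ hlbset)
    rw [nnGeo, ← hL, hinf]
    ring
  · rw [edgeSq]
    apply le_antisymm
    · exact csInf_le ⟨_, fun c hc => edgeSq_lb α hα Q hQ p hp c hc⟩
        (edgeSq_mem α hα Q hQ p hp)
    · exact le_csInf ⟨_, edgeSq_mem α hα Q hQ p hp⟩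
        (fun c hc => edgeSq_lb α hα Q hQ p hp c hc)
end
end

section
/- The lifting map m preserves the edge-squared distance to the source: letting d₂′ denote the edge-squared metric on the image point set m(P) ⊂ ℝⁿ, one has d₂′(m(s), m(p)) = d₂(s, p) for all p ∈ P. -/
open scoped BigOperators
open MeasureTheory
open scoped RealInnerProductSpace

noncomputable section

/-- The set of chain costs defining `edgeSq`. -/
def chainSet {d : ℕ} (P : Set (Pt d)) (a b : Pt d) : Set ℝ :=
  {c : ℝ | ∃ (k : ℕ) (p : Fin (k + 1) → Pt d), p 0 = a ∧ p (Fin.last k) = b ∧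
    (∀ i, p i ∈ P) ∧ c = ∑ i : Fin k, ‖p i.succ - p i.castSucc‖ ^ 2}

lemma edgeSq_eq_sInf_chainSet {d : ℕ} (P : Set (Pt d)) (a b : Pt d) :
    edgeSq P a b = sInf (chainSet P a b) := rfl

lemma chainSet_bddBelow {d : ℕ} (P : Set (Pt d)) (a b : Pt d) :
    BddBelow (chainSet P a b) := by
  refine ⟨0, ?_⟩
  rintro c ⟨k, q, -, -, -, rfl⟩
  positivity

lemma pair_mem_chainSet {d : ℕ} {P : Set (Pt d)} {a b : Pt d} (ha : a ∈ P) (hb : b ∈ P) :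
    ‖b - a‖ ^ 2 ∈ chainSet P a b := by
  refine ⟨1, ![a, b], rfl, rfl, ?_, ?_⟩
  · intro i; fin_cases i <;> assumption
  · simp

lemma edgeSq_le_pair {d : ℕ} {P : Set (Pt d)} {a b : Pt d} (ha : a ∈ P) (hb : b ∈ P) :
    edgeSq P a b ≤ ‖b - a‖ ^ 2 :=
  csInf_le (chainSet_bddBelow P a b) (pair_mem_chainSet ha hb)

lemma edgeSq_nonneg {d : ℕ} (P : Set (Pt d)) (a b : Pt d) : 0 ≤ edgeSq P a b := by
  apply Real.sInf_nonneg
  rintro c ⟨k, q, -, -, -, rfl⟩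
  positivity

lemma edgeSq_self {d : ℕ} {P : Set (Pt d)} {a : Pt d} (ha : a ∈ P) : edgeSq P a a = 0 := by
  refine le_antisymm ?_ (edgeSq_nonneg P a a)
  have h0 : (0 : ℝ) ∈ chainSet P a a := by
    refine ⟨0, fun _ => a, rfl, rfl, fun _ => ha, by simp⟩
  exact csInf_le (chainSet_bddBelow P a a) h0

lemma fin_telescope : ∀ (k : ℕ) (f : Fin (k + 1) → ℝ),
    ∑ i : Fin k, (f i.succ - f i.castSucc) = f (Fin.last k) - f 0 := by
  intro k
  induction k with
  | zero => intro f; simp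
  | succ k ih =>
    intro f
    rw [Fin.sum_univ_castSucc]
    have h := ih (fun j => f j.castSucc)
    simp only [Fin.succ_castSucc, Fin.castSucc_zero] at h
    simp only [Fin.succ_castSucc]
    rw [h, Fin.succ_last]
    ring

/-- The lifting map `m` preserves the edge-squared distance to the source:
letting `d₂'` be the edge-squared metric on the image point set `m(P) ⊆ ℝⁿ`,
`d₂'(m(s), m(p)) = d₂(s, p)` for all `p ∈ P`. -/
theorem liftMap_preserves_edgeSq (d n : ℕ) (P : Set (Pt d)) (p : Fin (n + 1) → Pt d)
    (hP : P = Set.range p)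
    (hmono : ∀ i j : Fin (n + 1), i ≤ j → edgeSq P (p 0) (p i) ≤ edgeSq P (p 0) (p j))
    (m : Fin (n + 1) → EuclideanSpace ℝ (Fin (n + 1)))
    (hm0 : m 0 = 0)
    (hrec : ∀ i : Fin n, m i.succ = m i.castSucc +
      Real.sqrt (edgeSq P (p 0) (p i.succ) - edgeSq P (p 0) (p i.castSucc)) •
        EuclideanSpace.single i.succ (1 : ℝ)) :
    ∀ i : Fin (n + 1),
      edgeSq (Set.range m) (m 0) (m i) = edgeSq P (p 0) (p i) := by
  set D : Fin (n + 1) → ℝ := fun i => edgeSq P (p 0) (p i) with hD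
  have hpmem : ∀ i, p i ∈ P := fun i => hP ▸ Set.mem_range_self i
  have hD0 : D 0 = 0 := edgeSq_self (hpmem 0)
  have hDnn : ∀ i, 0 ≤ D i := fun i => edgeSq_nonneg _ _ _
  -- coordinates above the index vanish
  have hcoord : ∀ r t : Fin (n + 1), r < t → m r t = 0 := by
    intro r
    induction r using Fin.induction with
    | zero => intro t _; rw [hm0]; rfl
    | succ i ih =>
      intro t ht
      have h1 : m i.castSucc t = 0 := ih t (lt_trans (Fin.castSucc_lt_succ : i.castSucc < i.succ) ht)
      have hne : t ≠ i.succ := ne_of_gt ht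
      have h2 : m i.succ t = m i.castSucc t +
          Real.sqrt (edgeSq P (p 0) (p i.succ) - edgeSq P (p 0) (p i.castSucc)) *
            (EuclideanSpace.single i.succ (1 : ℝ)) t := by
        rw [hrec i]; rfl
      rw [h2, h1, EuclideanSpace.single_apply, if_neg hne]
      ring
  -- squared distances in the image
  have hnsq : ∀ j i : Fin (n + 1), i ≤ j → ‖m j - m i‖ ^ 2 = D j - D i := by
    intro j
    induction j using Fin.induction with
    | zero =>
      intro i hi
      have : i = 0 := le_antisymm hi (Fin.zero_le i)
      subst this; simp
    | succ k ih =>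
      intro i hi
      by_cases hik : i = k.succ
      · subst hik; simp
      · have hlt : i < k.succ := lt_of_le_of_ne hi hik
        have hi' : i ≤ k.castSucc := by
          rw [Fin.le_castSucc_iff]; exact hlt
        set c := Real.sqrt (D k.succ - D k.castSucc) with hc
        have hcsq : c ^ 2 = D k.succ - D k.castSucc :=
          Real.sq_sqrt (sub_nonneg.2 (hmono _ _ (le_of_lt (Fin.castSucc_lt_succ : k.castSucc < k.succ))))
        have hrw : m k.succ - m i =
            (m k.castSucc - m i) + c • EuclideanSpace.single k.succ (1 : ℝ) := by
          rw [hrec k]; abel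
        have hinner :
            (inner ℝ (m k.castSucc - m i)
              (c • EuclideanSpace.single k.succ (1 : ℝ)) : ℝ) = 0 := by
          rw [real_inner_smul_right, EuclideanSpace.inner_single_right]
          have e1 : (m k.castSucc - m i) k.succ
              = m k.castSucc k.succ - m i k.succ := rfl
          rw [e1, hcoord k.castSucc k.succ (Fin.castSucc_lt_succ : k.castSucc < k.succ),
            hcoord i k.succ (lt_of_le_of_lt hi' (Fin.castSucc_lt_succ : k.castSucc < k.succ))]
          simp
        rw [hrw, norm_add_sq_real, hinner, ih i hi', norm_smul,
          EuclideanSpace.norm_single]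
        simp only [Real.norm_eq_abs, norm_one, mul_one, mul_pow, sq_abs]
        rw [hcsq]; ring
  have hnabs : ∀ a b : Fin (n + 1), ‖m a - m b‖ ^ 2 = |D a - D b| := by
    intro a b
    rcases le_total b a with h | h
    · rw [hnsq a b h, abs_of_nonneg (sub_nonneg.2 (hmono b a h))]
    · rw [norm_sub_rev, hnsq b a h, abs_sub_comm,
        abs_of_nonneg (sub_nonneg.2 (hmono a b h))]
  have hinj : ∀ a b : Fin (n + 1), m a = m b → D a = D b := by
    intro a b h
    have h2 : |D a - D b| = 0 := by
      have h3 := (hnabs a b).symm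
      rw [h, sub_self] at h3
      simpa using h3
    exact sub_eq_zero.1 (abs_eq_zero.1 h2)
  intro i
  have hDi : ‖m i - m 0‖ ^ 2 = D i := by
    rw [hnsq i 0 (Fin.zero_le i), hD0, sub_zero]
  refine le_antisymm ?_ ?_
  · calc edgeSq (Set.range m) (m 0) (m i) ≤ ‖m i - m 0‖ ^ 2 :=
        edgeSq_le_pair (Set.mem_range_self 0) (Set.mem_range_self i)
      _ = D i := hDi
  · rw [edgeSq_eq_sInf_chainSet]
    refine le_csInf ⟨‖m i - m 0‖ ^ 2,
      pair_mem_chainSet (Set.mem_range_self 0) (Set.mem_range_self i)⟩ ?_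
    rintro c ⟨k, q, hq0, hqlast, hqmem, rfl⟩
    choose σ hσ using hqmem
    have hlast : D (σ (Fin.last k)) = D i := hinj _ _ (by rw [hσ, hqlast])
    have h0 : D (σ 0) = D 0 := hinj _ _ (by rw [hσ, hq0])
    calc D i = |D (σ (Fin.last k)) - D (σ 0)| := by
          rw [hlast, h0, hD0, sub_zero, abs_of_nonneg (hDnn i)]
      _ = |∑ t : Fin k, (D (σ t.succ) - D (σ t.castSucc))| := by
          rw [fin_telescope k (fun t => D (σ t))]
      _ ≤ ∑ t : Fin k, |D (σ t.succ) - D (σ t.castSucc)| :=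
          Finset.abs_sum_le_sum_abs _ _
      _ = ∑ t : Fin k, ‖q t.succ - q t.castSucc‖ ^ 2 := by
          refine Finset.sum_congr rfl fun t _ => ?_
          rw [← hσ t.succ, ← hσ t.castSucc, hnabs]
end
end

section
/- Let P ⊂ ℝ^d be finite and let f : ℝ^d → ℝⁿ be 1-Lipschitz with respect to the Euclidean metrics. Then f is 1-Lipschitz with respect to the nearest-neighbor geodesic distances: for all a, b ∈ ℝ^d, d_N^{f(P)}(f(a), f(b)) ≤ d_N^P(a, b), where d_N^P and d_N^{f(P)} denote the nearest-neighbor geodesic distances relative to P and to the image set f(P), respectively. -/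
open scoped BigOperators
open MeasureTheory

noncomputable section

section Aux

open Set Metric intervalIntegral

variable {d n : ℕ}

/-- Gluing continuity on two adjacent closed intervals. -/
lemma glue_contOn {E : Type*} [NormedAddCommGroup E] {f : ℝ → E} {a b c : ℝ}
    (hab : a ≤ b) (hbc : b ≤ c) (h1 : ContinuousOn f (Set.Icc a b))
    (h2 : ContinuousOn f (Set.Icc b c)) : ContinuousOn f (Set.Icc a c) := by
  rw [← Set.Icc_union_Icc_eq_Icc hab hbc]
  intro x hx
  have g1 : ContinuousWithinAt f (Set.Icc a b) x := by
    by_cases h : x ∈ Set.Icc a b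
    · exact h1 x h
    · exact continuousWithinAt_of_notMem_closure (by rwa [isClosed_Icc.closure_eq])
  have g2 : ContinuousWithinAt f (Set.Icc b c) x := by
    by_cases h : x ∈ Set.Icc b c
    · exact h2 x h
    · exact continuousWithinAt_of_notMem_closure (by rwa [isClosed_Icc.closure_eq])
  exact g1.union g2

/-- Covering lemma: every point in the full interval lies in some piece. -/
lemma exists_piece {m : ℕ} (tp : Fin (m + 2) → ℝ) (hm : Monotone tp) {x : ℝ}
    (hx : x ∈ Set.Icc (tp 0) (tp (Fin.last (m + 1)))) :
    ∃ j : Fin (m + 1), x ∈ Set.Icc (tp j.castSucc) (tp j.succ) := by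
  classical
  set S : Finset (Fin (m + 2)) := Finset.univ.filter (fun i => tp i ≤ x) with hS
  have hS0 : (0 : Fin (m + 2)) ∈ S := by simp [hS, hx.1]
  have hSne : S.Nonempty := ⟨0, hS0⟩
  set i0 := S.max' hSne with hi0def
  have hi0 : tp i0 ≤ x := by
    have := S.max'_mem hSne
    simp only [hS, Finset.mem_filter] at this
    exact this.2
  by_cases hlast : (i0 : ℕ) < m + 1
  · refine ⟨⟨(i0 : ℕ), hlast⟩, ?_, ?_⟩
    · have hcast : (⟨(i0 : ℕ), hlast⟩ : Fin (m + 1)).castSucc = i0 := by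
        ext; simp
      rw [hcast]; exact hi0
    · by_contra h
      push_neg at h
      have hmem : (⟨(i0 : ℕ), hlast⟩ : Fin (m + 1)).succ ∈ S := by
        simp only [hS, Finset.mem_filter, Finset.mem_univ, true_and]
        exact h.le
      have hle := S.le_max' _ hmem
      rw [← hi0def] at hle
      have : (i0 : ℕ) + 1 ≤ (i0 : ℕ) := by
        simpa [Fin.le_def] using hle
      omega
  · have hieq : i0 = Fin.last (m + 1) := by
      ext
      have : (i0 : ℕ) < m + 2 := i0.isLt
      simp only [Fin.val_last]
      omega
    have hxeq : x = tp (Fin.last (m + 1)) := le_antisymm hx.2 (hieq ▸ hi0)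
    refine ⟨Fin.last m, ?_, ?_⟩
    · rw [hxeq]; exact hm (Fin.le_last _)
    · rw [hxeq, Fin.succ_last]

/-- Piecewise-linear interpolation path through the points `A 0, …, A N`. -/
def polyPath (N : ℕ) (A : ℕ → Pt n) (s : ℝ) : Pt n :=
  A (min (N - 1) ⌊(N : ℝ) * s⌋₊) +
    ((N : ℝ) * s - (min (N - 1) ⌊(N : ℝ) * s⌋₊ : ℕ)) •
      (A (min (N - 1) ⌊(N : ℝ) * s⌋₊ + 1) - A (min (N - 1) ⌊(N : ℝ) * s⌋₊))

lemma polyPath_eqOn {N : ℕ} (A : ℕ → Pt n) {k : ℕ} (hk : k < N) {s : ℝ}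
    (hs : s ∈ Set.Icc ((k : ℝ) / N) (((k : ℝ) + 1) / N)) :
    polyPath N A s = A k + ((N : ℝ) * s - k) • (A (k + 1) - A k) := by
  have hN0 : (0 : ℝ) < N := by exact_mod_cast Nat.pos_of_ne_zero (by omega)
  have hxlo : (k : ℝ) ≤ (N : ℝ) * s := by
    have := hs.1
    rw [div_le_iff₀ hN0] at this
    linarith
  have hxhi : (N : ℝ) * s ≤ (k : ℝ) + 1 := by
    have := hs.2
    rw [le_div_iff₀ hN0] at this
    linarith
  have hx0 : (0 : ℝ) ≤ (N : ℝ) * s := le_trans (by positivity) hxlo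
  rcases lt_or_eq_of_le hxhi with hlt | heq
  · have hfl : ⌊(N : ℝ) * s⌋₊ = k := by
      rw [Nat.floor_eq_iff hx0]
      exact ⟨hxlo, by push_cast; linarith⟩
    have hmin : min (N - 1) k = k := min_eq_right (by omega)
    simp only [polyPath, hfl, hmin]
  · have hfl : ⌊(N : ℝ) * s⌋₊ = k + 1 := by
      have : (N : ℝ) * s = ((k + 1 : ℕ) : ℝ) := by push_cast; linarith
      rw [this, Nat.floor_natCast]
    by_cases hkN : k + 1 = N
    · have hmin : min (N - 1) (k + 1) = k := by omega
      simp only [polyPath, hfl, hmin]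
    · have hmin : min (N - 1) (k + 1) = k + 1 := min_eq_right (by omega)
      have h1 : (N : ℝ) * s - ((k + 1 : ℕ) : ℝ) = 0 := by push_cast; linarith
      have h2 : (N : ℝ) * s - (k : ℝ) = 1 := by linarith
      simp only [polyPath, hfl, hmin, h1, h2, zero_smul, add_zero, one_smul]
      abel

lemma polyPath_deriv {N k : ℕ} (A : ℕ → Pt n) (hk : k < N) {s : ℝ}
    (hs : s ∈ Set.Ioo ((k : ℝ) / N) (((k : ℝ) + 1) / N)) :
    deriv (polyPath N A) s = (N : ℝ) • (A (k + 1) - A k) := by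
  have heq : polyPath N A =ᶠ[nhds s] fun x => A k + ((N : ℝ) * x - k) • (A (k + 1) - A k) :=
    Filter.eventually_of_mem (Ioo_mem_nhds hs.1 hs.2)
      (fun x hx => polyPath_eqOn A hk (Set.Ioo_subset_Icc_self hx))
  rw [heq.deriv_eq]
  have h1 : HasDerivAt (fun x : ℝ => (N : ℝ) * x - (k : ℝ)) (N : ℝ) s := by
    simpa using ((hasDerivAt_id s).const_mul (N : ℝ)).sub_const (k : ℝ)
  exact ((h1.smul_const (A (k + 1) - A k)).const_add (A k)).deriv

end Aux


section Aux2
open Set Metric intervalIntegral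
variable {d n : ℕ}

lemma affine_contDiff (c : ℝ) (k : ℝ) (v w : Pt n) :
    ContDiff ℝ 1 (fun x : ℝ => v + (c * x - k) • w) :=
  contDiff_const.add (((contDiff_const.mul contDiff_id).sub contDiff_const).smul contDiff_const)

lemma polyPath_piecewiseC1 {N : ℕ} (hN : 1 ≤ N) (A : ℕ → Pt n) :
    PiecewiseC1 (polyPath N A) := by
  have hN0 : (0 : ℝ) < N := by exact_mod_cast hN
  have hcell : ∀ k, k < N →
      ContinuousOn (polyPath N A) (Set.Icc ((k : ℝ) / N) (((k : ℝ) + 1) / N)) := by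
    intro k hk
    exact ((affine_contDiff (N : ℝ) (k : ℝ) (A k) (A (k + 1) - A k)).continuous.continuousOn).congr
      (fun s hs => polyPath_eqOn A hk hs)
  constructor
  · have main : ∀ k, k ≤ N → ContinuousOn (polyPath N A) (Set.Icc 0 ((k : ℝ) / N)) := by
      intro k
      induction k with
      | zero =>
        intro _
        simp only [Nat.cast_zero, zero_div, Set.Icc_self]
        exact continuousOn_singleton _ _
      | succ k ih =>
        intro hk
        have h1 : (0 : ℝ) ≤ (k : ℝ) / N := by positivity
        have h2 : (k : ℝ) / N ≤ ((k : ℝ) + 1) / N := by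
          gcongr
          linarith
        have := glue_contOn h1 h2 (ih (by omega)) (hcell k (by omega))
        rw [show ((k + 1 : ℕ) : ℝ) = (k : ℝ) + 1 by push_cast; ring]
        exact this
    have := main N le_rfl
    rwa [div_self (ne_of_gt hN0)] at this
  · refine ⟨N, fun i => ((i : ℕ) : ℝ) / N, ?_, by simp, ?_, ?_⟩
    · intro i j hij
      have h : ((i : ℕ) : ℝ) < ((j : ℕ) : ℝ) := by exact_mod_cast hij
      exact (div_lt_div_iff_of_pos_right hN0).mpr h
    · simp [Fin.val_last, div_self (ne_of_gt hN0)]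
    · intro i
      have hi : (i : ℕ) < N := i.isLt
      refine ((affine_contDiff (N : ℝ) ((i : ℕ) : ℝ) (A i) (A ((i : ℕ) + 1) - A i)).contDiffOn).congr ?_
      intro s hs
      have hs' : s ∈ Set.Icc (((i : ℕ) : ℝ) / N) ((((i : ℕ) : ℝ) + 1) / N) := by
        simpa [Fin.coe_castSucc, Fin.val_succ] using hs
      exact polyPath_eqOn A hi hs'
end Aux2


section Aux3
open Set Metric intervalIntegral
variable {d : ℕ}

lemma piece_est (γ : ℝ → Pt d) {p q u v : ℝ} (hγ : ContDiffOn ℝ 1 γ (Set.Icc p q))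
    (hint : IntervalIntegrable (deriv γ) MeasureTheory.volume u v)
    (hpu : p ≤ u) (huv : u ≤ v) (hvq : v ≤ q) :
    ‖γ v - γ u‖ ≤ ∫ t in u..v, ‖deriv γ t‖ := by
  have hsub : Set.Icc u v ⊆ Set.Icc p q := Set.Icc_subset_Icc hpu hvq
  have hFTC : ∫ t in u..v, deriv γ t = γ v - γ u := by
    apply integral_eq_sub_of_hasDeriv_right_of_le huv (hγ.continuousOn.mono hsub) ?_ hint
    intro x hx
    have hmem : Set.Icc p q ∈ nhds x :=
      Icc_mem_nhds (lt_of_le_of_lt hpu hx.1) (lt_of_lt_of_le hx.2 hvq)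
    exact (((hγ.contDiffAt hmem).differentiableAt one_ne_zero).hasDerivAt).hasDerivWithinAt
  rw [← hFTC]
  exact intervalIntegral.norm_integral_le_integral_norm huv

lemma bound_deriv {m : ℕ} (γ : ℝ → Pt d) (tp : Fin (m + 2) → ℝ)
    (hmono : StrictMono tp) (h0 : tp 0 = 0) (h1 : tp (Fin.last (m + 1)) = 1)
    (hC1 : ∀ i : Fin (m + 1), ContDiffOn ℝ 1 γ (Set.Icc (tp i.castSucc) (tp i.succ))) :
    ∃ M : ℝ, 0 ≤ M ∧ ∀ t ∈ Set.Icc (0 : ℝ) 1, ‖deriv γ t‖ ≤ M := by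
  have huniq : ∀ i : Fin (m + 1), UniqueDiffOn ℝ (Set.Icc (tp i.castSucc) (tp i.succ)) :=
    fun i => uniqueDiffOn_Icc (hmono (Fin.castSucc_lt_succ : i.castSucc < i.succ))
  have hbd : ∀ i : Fin (m + 1), ∃ Mi : ℝ, ∀ x ∈ Set.Icc (tp i.castSucc) (tp i.succ),
      ‖derivWithin γ (Set.Icc (tp i.castSucc) (tp i.succ)) x‖ ≤ Mi := by
    intro i
    exact isCompact_Icc.exists_bound_of_continuousOn
      ((hC1 i).continuousOn_derivWithin (huniq i) le_rfl)
  choose Mi hMi using hbd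
  refine ⟨max 0 (Finset.univ.sup' Finset.univ_nonempty Mi), le_max_left _ _, ?_⟩
  intro t ht
  obtain ⟨j, hj⟩ := exists_piece tp hmono.monotone (by rw [h0, h1]; exact ht)
  by_cases hdiff : DifferentiableAt ℝ γ t
  · have heq : derivWithin γ (Set.Icc (tp j.castSucc) (tp j.succ)) t = deriv γ t :=
      hdiff.hasDerivAt.hasDerivWithinAt.derivWithin ((huniq j) t hj)
    rw [← heq]
    exact le_trans (hMi j t hj) (le_max_of_le_right (Finset.le_sup' Mi (Finset.mem_univ j)))
  · rw [deriv_zero_of_not_differentiableAt hdiff]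
    simp

lemma chain_est {m : ℕ} (γ : ℝ → Pt d) (tp : Fin (m + 2) → ℝ)
    (hmono : StrictMono tp) (h0 : tp 0 = 0) (h1 : tp (Fin.last (m + 1)) = 1)
    (hC1 : ∀ i : Fin (m + 1), ContDiffOn ℝ 1 γ (Set.Icc (tp i.castSucc) (tp i.succ)))
    (hii : ∀ u v : ℝ, 0 ≤ u → v ≤ 1 → u ≤ v →
      IntervalIntegrable (deriv γ) MeasureTheory.volume u v) :
    ∀ u v : ℝ, 0 ≤ u → u ≤ v → v ≤ 1 → ‖γ v - γ u‖ ≤ ∫ t in u..v, ‖deriv γ t‖ := by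
  have htp01 : ∀ i, tp i ∈ Set.Icc (0 : ℝ) 1 := fun i =>
    ⟨h0 ▸ hmono.monotone (Fin.zero_le i), h1 ▸ hmono.monotone (Fin.le_last i)⟩
  have main : ∀ j : ℕ, ∀ hj : j < m + 2, ∀ u v : ℝ, 0 ≤ u → u ≤ v → v ≤ tp ⟨j, hj⟩ →
      ‖γ v - γ u‖ ≤ ∫ t in u..v, ‖deriv γ t‖ := by
    intro j
    induction j with
    | zero =>
      intro hj u v hu huv hv
      have hv0 : v ≤ 0 := by
        have : tp ⟨0, hj⟩ = 0 := h0
        linarith [this ▸ hv]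
      have huv' : u = v := le_antisymm huv (by linarith)
      subst huv'
      simp
    | succ j ih =>
      intro hj u v hu huv hv
      have hj' : j < m + 2 := by omega
      have hjm : j < m + 1 := by omega
      set jj : Fin (m + 1) := ⟨j, hjm⟩ with hjjdef
      have hcs : jj.castSucc = ⟨j, hj'⟩ := rfl
      have hsc : jj.succ = ⟨j + 1, hj⟩ := rfl
      have htpj0 : 0 ≤ tp ⟨j, hj'⟩ := (htp01 _).1
      have htpj1 : tp ⟨j + 1, hj⟩ ≤ 1 := (htp01 _).2
      have hv1 : v ≤ 1 := le_trans hv htpj1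
      by_cases hvj : v ≤ tp ⟨j, hj'⟩
      · exact ih hj' u v hu huv hvj
      · push_neg at hvj
        by_cases huj : tp ⟨j, hj'⟩ ≤ u
        · refine piece_est γ (hcs ▸ hsc ▸ hC1 jj) (hii u v hu hv1 huv) huj huv hv
        · push_neg at huj
          have h1' : ‖γ (tp ⟨j, hj'⟩) - γ u‖ ≤ ∫ t in u..(tp ⟨j, hj'⟩), ‖deriv γ t‖ :=
            ih hj' u (tp ⟨j, hj'⟩) hu huj.le le_rfl
          have h2' : ‖γ v - γ (tp ⟨j, hj'⟩)‖ ≤ ∫ t in (tp ⟨j, hj'⟩)..v, ‖deriv γ t‖ :=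
            piece_est γ (hcs ▸ hsc ▸ hC1 jj) (hii _ v htpj0 hv1 hvj.le) le_rfl hvj.le hv
          have hadd : (∫ t in u..(tp ⟨j, hj'⟩), ‖deriv γ t‖) +
              (∫ t in (tp ⟨j, hj'⟩)..v, ‖deriv γ t‖) = ∫ t in u..v, ‖deriv γ t‖ :=
            integral_add_adjacent_intervals ((hii u _ hu (htp01 _).2 huj.le).norm)
              ((hii _ v htpj0 hv1 hvj.le).norm)
          calc ‖γ v - γ u‖ ≤ ‖γ v - γ (tp ⟨j, hj'⟩)‖ + ‖γ (tp ⟨j, hj'⟩) - γ u‖ := by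
                have := dist_triangle (γ v) (γ (tp ⟨j, hj'⟩)) (γ u)
                simpa [dist_eq_norm] using this
            _ ≤ (∫ t in (tp ⟨j, hj'⟩)..v, ‖deriv γ t‖) + ∫ t in u..(tp ⟨j, hj'⟩), ‖deriv γ t‖ :=
                add_le_add h2' h1'
            _ = ∫ t in u..v, ‖deriv γ t‖ := by rw [add_comm]; exact hadd
  intro u v hu huv hv
  have hlast : tp ⟨m + 1, by omega⟩ = 1 := h1
  exact main (m + 1) (by omega) u v hu huv (by rw [hlast]; exact hv)

end Aux3


section Aux4
open Set Metric intervalIntegral MeasureTheory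

lemma infDist_image_le {d n : ℕ} {P : Set (Pt d)} (hP : P.Finite) {f : Pt d → Pt n}
    (hf : LipschitzWith 1 f) (x : Pt d) :
    Metric.infDist (f x) (f '' P) ≤ Metric.infDist x P := by
  rcases P.eq_empty_or_nonempty with rfl | hne
  · simp
  · obtain ⟨p, hp, hpd⟩ := hP.isCompact.exists_infDist_eq_dist hne x
    rw [hpd]
    calc Metric.infDist (f x) (f '' P) ≤ dist (f x) (f p) :=
          Metric.infDist_le_dist_of_mem (Set.mem_image_of_mem f hp)
      _ ≤ dist x p := by simpa using hf.dist_le_mul x p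

set_option maxHeartbeats 2000000 in
lemma key {d n : ℕ} (P : Set (Pt d)) (hP : P.Finite) (f : Pt d → Pt n)
    (hf : LipschitzWith 1 f) (γ : ℝ → Pt d) (hγ : PiecewiseC1 γ) {ε : ℝ} (hε : 0 < ε) :
    ∃ σ : ℝ → Pt n, PiecewiseC1 σ ∧ σ 0 = f (γ 0) ∧ σ 1 = f (γ 1) ∧
      nnLength (f '' P) σ ≤ nnLength P γ + ε := by
  obtain ⟨hcont, m', tp, hmono, ht0, ht1, hC1⟩ := hγ
  obtain ⟨m, rfl⟩ : ∃ m, m' = m + 1 := by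
    cases m' with
    | zero =>
      exfalso
      have h : tp 0 = 1 := by simpa [Fin.last] using ht1
      rw [ht0] at h; norm_num at h
    | succ k => exact ⟨k, rfl⟩
  obtain ⟨M, hM0, hM⟩ := bound_deriv γ tp hmono ht0 ht1 hC1
  have hg0 : ∀ t : ℝ, 0 ≤ ‖deriv γ t‖ := fun t => norm_nonneg _
  have hvol : (volume (Set.Icc (0:ℝ) 1)) ≠ ⊤ := measure_Icc_lt_top.ne
  have hder_int : IntegrableOn (deriv γ) (Set.Icc (0:ℝ) 1) := by
    apply Measure.integrableOn_of_bounded hvol ((measurable_deriv γ).aestronglyMeasurable)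
    exact (ae_restrict_mem measurableSet_Icc).mono (fun t ht => hM t ht)
  have hii : ∀ u v : ℝ, 0 ≤ u → v ≤ 1 → u ≤ v →
      IntervalIntegrable (deriv γ) volume u v := by
    intro u v hu hv huv
    rw [intervalIntegrable_iff_integrableOn_Ioc_of_le huv]
    exact hder_int.mono_set (le_trans Set.Ioc_subset_Icc_self (Set.Icc_subset_Icc hu hv))
  have hgii : ∀ u v : ℝ, 0 ≤ u → v ≤ 1 → u ≤ v →
      IntervalIntegrable (fun t => ‖deriv γ t‖) volume u v :=
    fun u v hu hv huv => (hii u v hu hv huv).norm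
  have hchain := chain_est γ tp hmono ht0 ht1 hC1 hii
  have hrcont : ContinuousOn (fun t => Metric.infDist (γ t) P) (Set.Icc (0:ℝ) 1) :=
    (Metric.continuous_infDist_pt P).comp_continuousOn hcont
  obtain ⟨R, hR⟩ := isCompact_Icc.exists_bound_of_continuousOn hrcont
  have hR0 : 0 ≤ R := le_trans (norm_nonneg _) (hR 0 (by norm_num))
  have hrg_int : IntegrableOn (fun t => Metric.infDist (γ t) P * ‖deriv γ t‖)
      (Set.Icc (0:ℝ) 1) := by
    refine ⟨?_, HasFiniteIntegral.restrict_of_bounded (R * M) hvol.lt_top ?_⟩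
    · exact (hrcont.aestronglyMeasurable measurableSet_Icc).mul
        ((measurable_deriv γ).norm.aestronglyMeasurable.restrict)
    · refine (ae_restrict_mem measurableSet_Icc).mono (fun t ht => ?_)
      rw [Real.norm_eq_abs, abs_mul, abs_of_nonneg Metric.infDist_nonneg,
        abs_of_nonneg (hg0 t)]
      exact mul_le_mul (le_trans (le_abs_self _)
          (by simpa [Real.norm_eq_abs] using hR t ht)) (hM t ht) (hg0 t) hR0
  have hrgii : ∀ u v : ℝ, 0 ≤ u → v ≤ 1 → u ≤ v →
      IntervalIntegrable (fun t => Metric.infDist (γ t) P * ‖deriv γ t‖) volume u v := by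
    intro u v hu hv huv
    rw [intervalIntegrable_iff_integrableOn_Ioc_of_le huv]
    exact hrg_int.mono_set (le_trans Set.Ioc_subset_Icc_self (Set.Icc_subset_Icc hu hv))
  -- choice of N
  obtain ⟨N, hN1, hNe⟩ : ∃ N : ℕ, 1 ≤ N ∧ 2 * (M ^ 2 / N) ≤ ε := by
    obtain ⟨N, hN⟩ := exists_nat_gt (2 * M ^ 2 / ε)
    refine ⟨N + 1, by omega, ?_⟩
    have hN' : 2 * M ^ 2 / ε < ((N + 1 : ℕ) : ℝ) := by
      push_cast
      push_cast at hN
      linarith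
    have hpos : (0:ℝ) < ((N + 1 : ℕ) : ℝ) := by positivity
    rw [div_lt_iff₀ hε] at hN'
    have heq : 2 * (M ^ 2 / ((N + 1 : ℕ) : ℝ)) = 2 * M ^ 2 / ((N + 1 : ℕ) : ℝ) := by ring
    rw [heq, div_le_iff₀ hpos]
    nlinarith
  have hN0 : (0:ℝ) < (N:ℝ) := by exact_mod_cast hN1
  set s : ℕ → ℝ := fun k => (k : ℝ) / N with hsdef
  have hs0 : s 0 = 0 := by simp [hsdef]
  have hsN : s N = 1 := by
    simp only [hsdef]
    exact div_self (ne_of_gt hN0)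
  have hsmono : ∀ {k l : ℕ}, k ≤ l → s k ≤ s l := by
    intro k l h
    simp only [hsdef]
    have h' : (k:ℝ) ≤ l := by exact_mod_cast h
    exact (div_le_div_iff_of_pos_right hN0).mpr h'
  have hs01 : ∀ k, k ≤ N → s k ∈ Set.Icc (0:ℝ) 1 := fun k hk =>
    ⟨hs0 ▸ hsmono (Nat.zero_le k), hsN ▸ hsmono hk⟩
  have hslt : ∀ k : ℕ, s (k+1) - s k = 1 / N := by
    intro k
    simp only [hsdef]
    push_cast
    field_simp
    ring
  set lam : ℕ → ℝ := fun k => ∫ t in s k..s (k+1), ‖deriv γ t‖ with hlamdef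
  have hcellsub : ∀ k, k < N → Set.Icc (s k) (s (k+1)) ⊆ Set.Icc (0:ℝ) 1 := fun k hk =>
    Set.Icc_subset_Icc (hs01 k (by omega)).1 (hs01 (k+1) (by omega)).2
  have hlam0 : ∀ k, k < N → 0 ≤ lam k := fun k hk =>
    intervalIntegral.integral_nonneg (hsmono (Nat.le_succ k)) (fun t _ => hg0 t)
  have hlamM : ∀ k, k < N → lam k ≤ M / N := by
    intro k hk
    have hint1 := hgii (s k) (s (k+1)) (hs01 k (by omega)).1 (hs01 (k+1) (by omega)).2
      (hsmono (Nat.le_succ k))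
    have h2 := intervalIntegral.integral_mono_on (hsmono (Nat.le_succ k)) hint1
      intervalIntegrable_const (fun t ht => hM t (hcellsub k hk ht))
    rw [intervalIntegral.integral_const, hslt k, smul_eq_mul] at h2
    calc lam k ≤ 1 / N * M := h2
      _ = M / N := by ring
  have hlamchain : ∀ k, k < N → ∀ t ∈ Set.Icc (s k) (s (k+1)), ‖γ t - γ (s k)‖ ≤ lam k := by
    intro k hk t ht
    have hsk0 : 0 ≤ s k := (hs01 k (by omega)).1
    have hsk1 : s (k+1) ≤ 1 := (hs01 (k+1) (by omega)).2
    have h1 : ‖γ t - γ (s k)‖ ≤ ∫ x in (s k)..t, ‖deriv γ x‖ :=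
      hchain (s k) t hsk0 ht.1 (le_trans ht.2 hsk1)
    have hadd : (∫ x in (s k)..t, ‖deriv γ x‖) + ∫ x in t..(s (k+1)), ‖deriv γ x‖ = lam k :=
      integral_add_adjacent_intervals (hgii _ _ hsk0 (le_trans ht.2 hsk1) ht.1)
        (hgii _ _ (le_trans hsk0 ht.1) hsk1 ht.2)
    have h3 : 0 ≤ ∫ x in t..(s (k+1)), ‖deriv γ x‖ :=
      intervalIntegral.integral_nonneg ht.2 (fun u _ => hg0 u)
    linarith
  set A : ℕ → Pt n := fun k => f (γ (s k)) with hAdef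
  set L : ℕ → ℝ := fun k => ‖A (k+1) - A k‖ with hLdef
  have hLlam : ∀ k, k < N → L k ≤ lam k := by
    intro k hk
    have h1 : L k ≤ ‖γ (s (k+1)) - γ (s k)‖ := by
      have := hf.dist_le_mul (γ (s (k+1))) (γ (s k))
      simpa [hLdef, hAdef, dist_eq_norm] using this
    exact le_trans h1 (hlamchain k hk (s (k+1)) ⟨hsmono (Nat.le_succ k), le_rfl⟩)
  refine ⟨polyPath N A, polyPath_piecewiseC1 hN1 A, ?_, ?_, ?_⟩
  · have hmem : (0:ℝ) ∈ Set.Icc (((0:ℕ):ℝ)/N) ((((0:ℕ):ℝ)+1)/N) := by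
      constructor
      · simp
      · positivity
    have heq := polyPath_eqOn A (show (0:ℕ) < N by omega) hmem
    rw [heq]
    simp [hAdef, hsdef]
  · have hNk : N - 1 < N := by omega
    have hcast : ((N - 1 : ℕ) : ℝ) = (N : ℝ) - 1 := by
      push_cast [Nat.cast_sub hN1]
      ring
    have hmem : (1:ℝ) ∈ Set.Icc (((N-1:ℕ):ℝ)/N) ((((N-1:ℕ):ℝ)+1)/N) := by
      rw [hcast]
      constructor
      · rw [div_le_one hN0]; linarith
      · have h2 : (N:ℝ) - 1 + 1 = N := by ring
        rw [h2, div_self (ne_of_gt hN0)]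
    have heq := polyPath_eqOn A hNk hmem
    rw [heq]
    have h1 : (N:ℝ) * 1 - ((N-1:ℕ):ℝ) = 1 := by rw [hcast]; ring
    rw [h1, one_smul]
    have h2 : N - 1 + 1 = N := by omega
    rw [h2]
    have h3 : A (N-1) + (A N - A (N-1)) = A N := by abel
    rw [h3]
    simp only [hAdef, hsN]
  · -- the length estimate
    have hcell : ∀ k, k < N →
        IntervalIntegrable (fun t => Metric.infDist (polyPath N A t) (f '' P) *
          ‖deriv (polyPath N A) t‖) volume (s k) (s (k+1)) ∧
        (∫ t in s k..s (k+1), Metric.infDist (polyPath N A t) (f '' P) *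
          ‖deriv (polyPath N A) t‖) ≤ (Metric.infDist (A k) (f '' P) + L k) * L k := by
      intro k hk
      have hscell : s k ≤ s (k+1) := hsmono (Nat.le_succ k)
      have hcells : s k = (k:ℝ)/N := rfl
      have hcells' : s (k+1) = ((k:ℝ)+1)/N := by
        simp only [hsdef]
        push_cast
        ring
      have hGcont : Continuous (fun x : ℝ => Metric.infDist
          (A k + ((N:ℝ) * x - (k:ℝ)) • (A (k+1) - A k)) (f '' P) *
          ‖(N:ℝ) • (A (k+1) - A k)‖) :=
        ((Metric.continuous_infDist_pt (f '' P)).comp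
          (affine_contDiff (N:ℝ) (k:ℝ) (A k) (A (k+1) - A k)).continuous).mul continuous_const
      have heqIoo : ∀ x ∈ Set.Ioo (s k) (s (k+1)),
          Metric.infDist (polyPath N A x) (f '' P) * ‖deriv (polyPath N A) x‖ =
          Metric.infDist (A k + ((N:ℝ) * x - (k:ℝ)) • (A (k+1) - A k)) (f '' P) *
            ‖(N:ℝ) • (A (k+1) - A k)‖ := by
        intro x hx
        have hx' : x ∈ Set.Ioo ((k:ℝ)/N) (((k:ℝ)+1)/N) := by
          rw [← hcells, ← hcells']; exact hx
        rw [polyPath_eqOn A hk (Set.Ioo_subset_Icc_self hx'), polyPath_deriv A hk hx']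
      have hrestr : volume.restrict (Set.Ioc (s k) (s (k+1))) =
          volume.restrict (Set.Ioo (s k) (s (k+1))) :=
        (Measure.restrict_congr_set Ioo_ae_eq_Ioc).symm
      have hFint : IntervalIntegrable (fun t => Metric.infDist (polyPath N A t) (f '' P) *
          ‖deriv (polyPath N A) t‖) volume (s k) (s (k+1)) := by
        rw [intervalIntegrable_iff_integrableOn_Ioc_of_le hscell]
        apply Integrable.congr (hGcont.integrableOn_Ioc)
        rw [hrestr]
        exact (ae_restrict_mem measurableSet_Ioo).mono (fun x hx => (heqIoo x hx).symm)
      have hne : ∀ᵐ x : ℝ, x ≠ s (k+1) := by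
        filter_upwards [compl_mem_ae_iff.mpr (measure_singleton (s (k+1)))] with x hx
        simpa using hx
      have hintval : (∫ t in s k..s (k+1), Metric.infDist (polyPath N A t) (f '' P) *
          ‖deriv (polyPath N A) t‖) = ∫ t in s k..s (k+1),
          Metric.infDist (A k + ((N:ℝ) * t - (k:ℝ)) • (A (k+1) - A k)) (f '' P) *
            ‖(N:ℝ) • (A (k+1) - A k)‖ := by
        apply intervalIntegral.integral_congr_ae
        filter_upwards [hne] with x hx hmem
        rw [Set.uIoc_of_le hscell] at hmem
        exact heqIoo x ⟨hmem.1, lt_of_le_of_ne hmem.2 hx⟩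
      have hGbound : ∀ x ∈ Set.Icc (s k) (s (k+1)),
          Metric.infDist (A k + ((N:ℝ) * x - (k:ℝ)) • (A (k+1) - A k)) (f '' P) *
            ‖(N:ℝ) • (A (k+1) - A k)‖ ≤
          (Metric.infDist (A k) (f '' P) + L k) * ((N:ℝ) * L k) := by
        intro x hx
        have hx' : x ∈ Set.Icc ((k:ℝ)/N) (((k:ℝ)+1)/N) := by
          rw [← hcells, ← hcells']; exact hx
        have hfrac0 : 0 ≤ (N:ℝ) * x - k := by
          have := hx'.1; rw [div_le_iff₀ hN0] at this; linarith
        have hfrac1 : (N:ℝ) * x - k ≤ 1 := by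
          have := hx'.2; rw [le_div_iff₀ hN0] at this; linarith
        have hd : Metric.infDist (A k + ((N:ℝ) * x - (k:ℝ)) • (A (k+1) - A k)) (f '' P) ≤
            Metric.infDist (A k) (f '' P) + L k := by
          calc Metric.infDist (A k + ((N:ℝ) * x - (k:ℝ)) • (A (k+1) - A k)) (f '' P) ≤
              Metric.infDist (A k) (f '' P) +
                dist (A k + ((N:ℝ) * x - (k:ℝ)) • (A (k+1) - A k)) (A k) :=
                Metric.infDist_le_infDist_add_dist
            _ ≤ _ := by
                apply add_le_add_right
                rw [dist_eq_norm]
                have heq2 : A k + ((N:ℝ) * x - (k:ℝ)) • (A (k+1) - A k) - A k =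
                    ((N:ℝ) * x - (k:ℝ)) • (A (k+1) - A k) := by abel
                rw [heq2, norm_smul, Real.norm_eq_abs, abs_of_nonneg hfrac0]
                calc ((N:ℝ) * x - k) * ‖A (k+1) - A k‖ ≤ 1 * ‖A (k+1) - A k‖ :=
                      mul_le_mul_of_nonneg_right hfrac1 (norm_nonneg _)
                  _ = L k := by rw [one_mul]
        have hnorm : ‖(N:ℝ) • (A (k+1) - A k)‖ = (N:ℝ) * L k := by
          rw [norm_smul, Real.norm_eq_abs, abs_of_nonneg hN0.le]
        rw [hnorm]
        exact mul_le_mul_of_nonneg_right hd (by positivity)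
      refine ⟨hFint, ?_⟩
      rw [hintval]
      calc (∫ t in s k..s (k+1),
          Metric.infDist (A k + ((N:ℝ) * t - (k:ℝ)) • (A (k+1) - A k)) (f '' P) *
            ‖(N:ℝ) • (A (k+1) - A k)‖) ≤
          ∫ _ in s k..s (k+1), (Metric.infDist (A k) (f '' P) + L k) * ((N:ℝ) * L k) :=
            intervalIntegral.integral_mono_on hscell (hGcont.intervalIntegrable _ _)
              intervalIntegrable_const hGbound
        _ = (Metric.infDist (A k) (f '' P) + L k) * L k := by
            rw [intervalIntegral.integral_const, hslt k, smul_eq_mul]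
            field_simp
    have hσsum : nnLength (f '' P) (polyPath N A) = ∑ k ∈ Finset.range N,
        ∫ t in s k..s (k+1), Metric.infDist (polyPath N A t) (f '' P) *
          ‖deriv (polyPath N A) t‖ := by
      have h := intervalIntegral.sum_integral_adjacent_intervals (μ := volume) (a := s) (n := N)
        (fun k hk => (hcell k hk).1)
      rw [hs0, hsN] at h
      rw [nnLength]
      exact h.symm
    have hγsum : nnLength P γ = ∑ k ∈ Finset.range N,
        ∫ t in s k..s (k+1), Metric.infDist (γ t) P * ‖deriv γ t‖ := by
      have h := intervalIntegral.sum_integral_adjacent_intervals (μ := volume) (a := s) (n := N)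
        (fun k hk => hrgii _ _ (hs01 k (by omega)).1 (hs01 (k+1) (by omega)).2
          (hsmono (Nat.le_succ k)))
      rw [hs0, hsN] at h
      rw [nnLength]
      exact h.symm
    have hlow : ∀ k, k < N → (Metric.infDist (γ (s k)) P - lam k) * lam k ≤
        ∫ t in s k..s (k+1), Metric.infDist (γ t) P * ‖deriv γ t‖ := by
      intro k hk
      have hscell : s k ≤ s (k+1) := hsmono (Nat.le_succ k)
      have h1 : ∀ t ∈ Set.Icc (s k) (s (k+1)),
          (Metric.infDist (γ (s k)) P - lam k) * ‖deriv γ t‖ ≤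
          Metric.infDist (γ t) P * ‖deriv γ t‖ := by
        intro t ht
        apply mul_le_mul_of_nonneg_right ?_ (hg0 t)
        have htriangle : Metric.infDist (γ (s k)) P ≤
            Metric.infDist (γ t) P + dist (γ (s k)) (γ t) :=
          Metric.infDist_le_infDist_add_dist
        have hdist : dist (γ (s k)) (γ t) ≤ lam k := by
          rw [dist_comm, dist_eq_norm]
          exact hlamchain k hk t ht
        linarith
      have h2 := intervalIntegral.integral_mono_on hscell
        ((hgii _ _ (hs01 k (by omega)).1 (hs01 (k+1) (by omega)).2 hscell).const_mul _)
        (hrgii _ _ (hs01 k (by omega)).1 (hs01 (k+1) (by omega)).2 hscell) h1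
      rwa [intervalIntegral.integral_const_mul] at h2
    have hkey : ∀ k, k < N → (∫ t in s k..s (k+1),
        Metric.infDist (polyPath N A t) (f '' P) * ‖deriv (polyPath N A) t‖) ≤
        (∫ t in s k..s (k+1), Metric.infDist (γ t) P * ‖deriv γ t‖) + 2 * lam k ^ 2 := by
      intro k hk
      have hub := (hcell k hk).2
      have hLl := hLlam k hk
      have hl0 : 0 ≤ lam k := hlam0 k hk
      have hL0 : (0:ℝ) ≤ L k := norm_nonneg _
      have hQP : Metric.infDist (A k) (f '' P) ≤ Metric.infDist (γ (s k)) P :=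
        infDist_image_le hP hf _
      have hlo := hlow k hk
      have hiA0 : (0:ℝ) ≤ Metric.infDist (A k) (f '' P) := Metric.infDist_nonneg
      have hiP0 : (0:ℝ) ≤ Metric.infDist (γ (s k)) P := Metric.infDist_nonneg
      have hstep : (Metric.infDist (A k) (f '' P) + L k) * L k ≤
          (Metric.infDist (γ (s k)) P + lam k) * lam k :=
        mul_le_mul (add_le_add hQP hLl) hLl hL0 (by positivity)
      nlinarith [hstep, hub, hlo]
    have hsumbound : nnLength (f '' P) (polyPath N A) ≤ nnLength P γ +
        2 * ∑ k ∈ Finset.range N, lam k ^ 2 := by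
      rw [hσsum, hγsum]
      calc (∑ k ∈ Finset.range N, ∫ t in s k..s (k+1),
            Metric.infDist (polyPath N A t) (f '' P) * ‖deriv (polyPath N A) t‖) ≤
          ∑ k ∈ Finset.range N, ((∫ t in s k..s (k+1),
            Metric.infDist (γ t) P * ‖deriv γ t‖) + 2 * lam k ^ 2) :=
            Finset.sum_le_sum (fun k hk => hkey k (Finset.mem_range.mp hk))
        _ = (∑ k ∈ Finset.range N, ∫ t in s k..s (k+1),
            Metric.infDist (γ t) P * ‖deriv γ t‖) +
            ∑ k ∈ Finset.range N, 2 * lam k ^ 2 := Finset.sum_add_distrib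
        _ = (∑ k ∈ Finset.range N, ∫ t in s k..s (k+1),
            Metric.infDist (γ t) P * ‖deriv γ t‖) +
            2 * ∑ k ∈ Finset.range N, lam k ^ 2 := by rw [Finset.mul_sum]
    have hlamsum : ∑ k ∈ Finset.range N, lam k ^ 2 ≤ M ^ 2 / N := by
      have h1 : ∀ k ∈ Finset.range N, lam k ^ 2 ≤ M / N * lam k := by
        intro k hk
        have hk' := Finset.mem_range.mp hk
        have := mul_le_mul_of_nonneg_right (hlamM k hk') (hlam0 k hk')
        nlinarith [this]
      calc ∑ k ∈ Finset.range N, lam k ^ 2 ≤ ∑ k ∈ Finset.range N, M / N * lam k :=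
            Finset.sum_le_sum h1
        _ = M / N * ∑ k ∈ Finset.range N, lam k := by rw [← Finset.mul_sum]
        _ ≤ M / N * M := by
            apply mul_le_mul_of_nonneg_left ?_ (by positivity)
            have hsg : ∑ k ∈ Finset.range N, lam k = ∫ t in (0:ℝ)..1, ‖deriv γ t‖ := by
              have h := intervalIntegral.sum_integral_adjacent_intervals (μ := volume)
                (a := s) (n := N) (fun k hk => hgii _ _ (hs01 k (by omega)).1
                  (hs01 (k+1) (by omega)).2 (hsmono (Nat.le_succ k)))
              rw [hs0, hsN] at h
              exact h
            rw [hsg]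
            have h := intervalIntegral.integral_mono_on (by norm_num : (0:ℝ) ≤ 1)
              (hgii 0 1 le_rfl le_rfl (by norm_num)) intervalIntegrable_const hM
            simpa using h
        _ = M ^ 2 / N := by ring
    calc nnLength (f '' P) (polyPath N A) ≤ nnLength P γ +
          2 * ∑ k ∈ Finset.range N, lam k ^ 2 := hsumbound
      _ ≤ nnLength P γ + 2 * (M ^ 2 / N) := by linarith [hlamsum]
      _ ≤ nnLength P γ + ε := by linarith [hNe]

end Aux4


section Main
open Set Metric intervalIntegral MeasureTheory

lemma line_piecewiseC1 {d : ℕ} (a b : Pt d) : PiecewiseC1 (fun t : ℝ => a + t • (b - a)) := by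
  have hcd : ContDiff ℝ 1 (fun t : ℝ => a + t • (b - a)) :=
    contDiff_const.add (contDiff_id.smul contDiff_const)
  refine ⟨hcd.continuous.continuousOn, 1, fun i => ((i : ℕ) : ℝ), ?_, by simp, by simp, ?_⟩
  · intro i j hij
    show ((i : ℕ) : ℝ) < ((j : ℕ) : ℝ)
    exact_mod_cast (Fin.lt_iff_val_lt_val.mp hij)
  · intro i
    exact hcd.contDiffOn

theorem nnGeo_lipschitz_map' (d n : ℕ) (P : Set (Pt d)) (hP : P.Finite)
    (f : Pt d → Pt n) (hf : LipschitzWith 1 f) (a b : Pt d) :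
    nnGeo (f '' P) (f a) (f b) ≤ nnGeo P a b := by
  have hbdd : BddBelow {l : ℝ | ∃ σ : ℝ → Pt n, PiecewiseC1 σ ∧ σ 0 = f a ∧ σ 1 = f b ∧
      l = nnLength (f '' P) σ} := by
    refine ⟨0, ?_⟩
    rintro l ⟨σ, _, _, _, rfl⟩
    exact intervalIntegral.integral_nonneg (by norm_num)
      (fun t _ => mul_nonneg Metric.infDist_nonneg (norm_nonneg _))
  rw [nnGeo, nnGeo]
  apply mul_le_mul_of_nonneg_left ?_ (by norm_num)
  apply le_csInf
  · exact ⟨nnLength P (fun t : ℝ => a + t • (b - a)), fun t : ℝ => a + t • (b - a),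
      line_piecewiseC1 a b, by simp, by simp, rfl⟩
  · rintro l ⟨γ, hγ, hγ0, hγ1, rfl⟩
    by_contra hcon
    push_neg at hcon
    set ε := (sInf {l : ℝ | ∃ σ : ℝ → Pt n, PiecewiseC1 σ ∧ σ 0 = f a ∧ σ 1 = f b ∧
      l = nnLength (f '' P) σ} - nnLength P γ) / 2 with hεdef
    have hε : 0 < ε := by
      rw [hεdef]; linarith
    obtain ⟨σ, hσ, hσ0, hσ1, hle⟩ := key P hP f hf γ hγ hε
    have hmem : nnLength (f '' P) σ ∈ {l : ℝ | ∃ σ : ℝ → Pt n, PiecewiseC1 σ ∧ σ 0 = f a ∧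
        σ 1 = f b ∧ l = nnLength (f '' P) σ} :=
      ⟨σ, hσ, by rw [hσ0, hγ0], by rw [hσ1, hγ1], rfl⟩
    have := csInf_le hbdd hmem
    rw [hεdef] at hle
    linarith
end Main

/-- If `f : ℝ^d → ℝⁿ` is 1-Lipschitz for the Euclidean metrics, then `f` is
1-Lipschitz for the nearest-neighbor geodesic distances relative to a finite set `P` and its
image `f(P)`: `d_N^{f(P)}(f a, f b) ≤ d_N^P(a, b)` for all `a, b ∈ ℝ^d`. -/
theorem nnGeo_lipschitz_map (d n : ℕ) (P : Set (Pt d)) (hP : P.Finite)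
    (f : Pt d → Pt n) (hf : LipschitzWith 1 f) (a b : Pt d) :
    nnGeo (f '' P) (f a) (f b) ≤ nnGeo P a b :=
  nnGeo_lipschitz_map' d n P hP f hf a b
end
end
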